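/- arXiv:math/0110280 — 2 statements merged into one kernel-verified Lean document; each statement's English description precedes it below -/
import Mathlib

section
/- (m-goodness is overwhelmingly likely, even conditioned on few empty sites.) For all d ≥ 1, every p_1 ∈ (0,1] and every h > 0 there exist positive finite constants α_3 = α_3(d, p_1, h) and β_3 = β_3(d, p_1, h) such that: for every m ≥ 1, every integer k_0 with 0 ≤ k_0 ≤ n̂_d(m)^d, and every collection of distinct sites x_1, …, x_{k_0} ∈ ℤ^d for which the event {η(x_1) = ⋯ = η(x_{k_0}) = 0} has positive probability, one has P[η is (m,h)-good │ η(x_1) = ⋯ = η(x_{k_0}) = 0] ≥ 1 − α_3 · exp(−m^{β_3}). -/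
open MeasureTheory ProbabilityTheory Filter Set
open scoped ENNReal NNReal Pointwise

noncomputable section

/-- An i.i.d. family `η = (η(x))_{x ∈ ℤ^d}` of `ℕ`-valued random variables. -/
structure IIDConfig (d : ℕ) (Ω : Type) [MeasurableSpace Ω] (P : Measure Ω) where
  η : (Fin d → ℤ) → Ω → ℕ
  meas_η : ∀ x, Measurable (η x)
  η_ident : ∀ x, Measure.map (η x) P = Measure.map (η 0) P
  indep : iIndepFun η P

end

noncomputable section

/-- `ε_d = 1/(6(d-2))` (only used for `d ≥ 3`). -/
def epsd (d : ℕ) : ℝ := 1 / (6 * ((d : ℝ) - 2))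

/-- `n_d(m) = (m/h)^{1/(1+2ε_d)}` for `d ≥ 3`, and `(m/h)^{1/2}` for `d = 1, 2`. -/
def ndm (d : ℕ) (h : ℝ) (m : ℕ) : ℝ :=
  if 3 ≤ d then ((m : ℝ) / h) ^ (1 / (1 + 2 * epsd d)) else ((m : ℝ) / h) ^ ((1 : ℝ) / 2)

/-- `n̂_d(m) = n_d(m)^{(1-ε_d)/3}` for `d ≥ 3`, and `n_d(m)^{1/8}` for `d = 1, 2`. -/
def nhat (d : ℕ) (h : ℝ) (m : ℕ) : ℝ :=
  if 3 ≤ d then (ndm d h m) ^ ((1 - epsd d) / 3) else (ndm d h m) ^ ((1 : ℝ) / 8)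

/-- The Euclidean norm of a lattice point. -/
def euclNorm {d : ℕ} (x : Fin d → ℤ) : ℝ := Real.sqrt (∑ i, ((x i : ℝ)) ^ 2)

/-- `D⁽ⁿ⁾_i = {x ∈ ℤ^d : ‖x‖ ≤ i n^{1/2+ε_d}}`. -/
def Dball (d : ℕ) (n : ℝ) (i : ℕ) : Set (Fin d → ℤ) :=
  {x | euclNorm x ≤ (i : ℝ) * n ^ ((1 : ℝ) / 2 + epsd d)}

/-- The lattice points within Euclidean distance `r` of `c`. -/
def latticeBall {d : ℕ} (c : Fin d → ℤ) (r : ℝ) : Set (Fin d → ℤ) :=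
  {x | euclNorm (x - c) ≤ r}

/-- `R_ω(B)`: the density of occupied sites of the configuration `w` in the set `B`. -/
def Rdens {d : ℕ} (w : (Fin d → ℤ) → ℕ) (B : Set (Fin d → ℤ)) : ℝ :=
  (Nat.card B : ℝ)⁻¹ * ∑ᶠ x ∈ B, (if 1 ≤ w x then (1 : ℝ) else 0)

/-- A configuration `w` is `(m,h)`-good (for density level `p₁`). -/
def IsGood (d : ℕ) (p₁ h : ℝ) (m : ℕ) (w : (Fin d → ℤ) → ℕ) : Prop :=
  if 4 ≤ d then
    (∀ c : Fin d → ℤ,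
        latticeBall c ((ndm d h m) ^ ((1 - epsd d) / 2)) ⊆ Dball d (ndm d h m) 1 →
        p₁ / 2 ≤ Rdens w (latticeBall c ((ndm d h m) ^ ((1 - epsd d) / 2)))) ∧
    (∀ i : ℕ, 2 ≤ i → i ≤ d / 2 →
        p₁ / 2 ≤ Rdens w (Dball d (ndm d h m) i \ Dball d (ndm d h m) (i - 1)))
  else if d = 3 then
    ∀ c : Fin d → ℤ,
      latticeBall c ((ndm d h m) ^ ((1 - epsd d) / 2)) ⊆ Dball d (ndm d h m) 1 →
      p₁ / 2 ≤ Rdens w (latticeBall c ((ndm d h m) ^ ((1 - epsd d) / 2)))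
  else
    ∀ c : Fin d → ℤ, euclNorm c ≤ ndm d h m →
      p₁ / 2 ≤ Rdens w (latticeBall c ((ndm d h m) ^ ((1 : ℝ) / 4)))

end

section Chernoff

variable {d : ℕ} {Ω : Type} [MeasurableSpace Ω] {P : Measure Ω} [IsProbabilityMeasure P]

/-- The occupation indicator. -/
def occInd : ℕ → ℝ := fun n => if 1 ≤ n then 1 else 0

lemma occInd_meas : Measurable occInd := measurable_from_top

lemma occInd_nonneg (n : ℕ) : 0 ≤ occInd n := by
  unfold occInd; split <;> norm_num

lemma occInd_exp (t : ℝ) (n : ℕ) :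
    Real.exp (t * occInd n) = 1 + (Real.exp t - 1) * occInd n := by
  unfold occInd; split <;> simp

/-- expectation of a bounded function of one site. -/
lemma exp_occInd (C : IIDConfig d Ω P) {p₁ : ℝ} (hp₁ : p₁ = (P {ω | 1 ≤ C.η 0 ω}).toReal)
    (x : Fin d → ℤ) :
    ∫ ω, occInd (C.η x ω) ∂P = p₁ := by
  have hmap : ∀ y : Fin d → ℤ, ∫ ω, occInd (C.η y ω) ∂P = ∫ n, occInd n ∂(Measure.map (C.η y) P) := by
    intro y
    rw [MeasureTheory.integral_map (C.meas_η y).aemeasurable occInd_meas.aestronglyMeasurable]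
  have h0 : ∫ ω, occInd (C.η 0 ω) ∂P = p₁ := by
    have : (fun ω => occInd (C.η 0 ω)) = fun ω =>
        Set.indicator {ω | 1 ≤ C.η 0 ω} (fun _ => (1:ℝ)) ω := by
      funext ω
      simp only [Set.indicator_apply, Set.mem_setOf_eq, occInd]
    rw [this, MeasureTheory.integral_indicator_const]
    · rw [hp₁]; simp; rfl
    · exact C.meas_η 0 MeasurableSpace.measurableSet_top
  rw [hmap x, C.η_ident x, ← hmap 0, h0]

lemma integrable_occInd (C : IIDConfig d Ω P) (x : Fin d → ℤ) :
    MeasureTheory.Integrable (fun ω => occInd (C.η x ω)) P := by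
  refine MeasureTheory.Integrable.mono' (MeasureTheory.integrable_const 1)
    (occInd_meas.comp (C.meas_η x)).aestronglyMeasurable ?_
  refine Filter.Eventually.of_forall fun ω => ?_
  rw [Real.norm_eq_abs]
  unfold occInd; split <;> simp

lemma mgf_occInd (C : IIDConfig d Ω P) {p₁ : ℝ} (hp₁ : p₁ = (P {ω | 1 ≤ C.η 0 ω}).toReal)
    (x : Fin d → ℤ) (t : ℝ) :
    ProbabilityTheory.mgf (fun ω => occInd (C.η x ω)) P t = 1 + (Real.exp t - 1) * p₁ := by
  unfold ProbabilityTheory.mgf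
  have : (fun ω => Real.exp (t * occInd (C.η x ω))) =
      fun ω => 1 + (Real.exp t - 1) * occInd (C.η x ω) := by
    funext ω; exact occInd_exp t _
  rw [this, MeasureTheory.integral_add (MeasureTheory.integrable_const 1)
    ((integrable_occInd C x).const_mul _), MeasureTheory.integral_const,
    MeasureTheory.integral_const_mul, exp_occInd C hp₁ x]
  simp

end Chernoff

section Chernoff2

variable {d : ℕ} {Ω : Type} [MeasurableSpace Ω] {P : Measure Ω} [IsProbabilityMeasure P]

/-- Chernoff bound for the density of occupied sites in a finite nonempty region. -/
lemma chernoff_region (C : IIDConfig d Ω P) {p₁ : ℝ}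
    (hp₁ : p₁ = (P {ω | 1 ≤ C.η 0 ω}).toReal) (hp₁le : p₁ ≤ 1)
    (B : Set (Fin d → ℤ)) (hB : B.Finite) (hne : B.Nonempty) :
    P {ω | Rdens (fun x => C.η x ω) B < p₁ / 2} ≤
      ENNReal.ofReal (Real.exp (-(p₁ * (1 - Real.log 2) / 2) * (Nat.card B : ℝ))) := by
  classical
  set t : ℝ := -Real.log 2 with ht_def
  have ht : t ≤ 0 := neg_nonpos.mpr (Real.log_nonneg one_le_two)
  set Bf : Finset (Fin d → ℤ) := hB.toFinset with hBf
  set N : ℕ := Bf.card with hN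
  have hNcard : Nat.card B = N := by
    rw [Nat.card_coe_set_eq, hN, hBf, Set.ncard_eq_toFinset_card _ hB]
  have hNpos : 0 < N := Finset.card_pos.mpr (by simpa [hBf] using hne)
  set X : (Fin d → ℤ) → Ω → ℝ := fun x ω => occInd (C.η x ω) with hX
  have hXmeas : ∀ x, Measurable (X x) := fun x => occInd_meas.comp (C.meas_η x)
  have hSmeas : Measurable (∑ x ∈ Bf, X x) := by
    have : (∑ x ∈ Bf, X x) = fun ω => ∑ x ∈ Bf, X x ω := by
      funext ω; simp
    rw [this]
    exact Finset.measurable_sum _ fun x _ => hXmeas x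
  have hXnn : ∀ x ω, 0 ≤ X x ω := fun x ω => occInd_nonneg _
  -- event inclusion
  have hsub : {ω | Rdens (fun x => C.η x ω) B < p₁ / 2} ⊆
      {ω | (∑ x ∈ Bf, X x) ω ≤ p₁ * N / 2} := by
    intro ω hω
    simp only [Set.mem_setOf_eq] at hω ⊢
    have hBcoe : B = ↑Bf := by simp [hBf]
    have hRd : Rdens (fun x => C.η x ω) B = (N : ℝ)⁻¹ * ∑ x ∈ Bf, X x ω := by
      unfold Rdens
      rw [hNcard, hBcoe, finsum_mem_coe_finset]
      rfl
    rw [hRd] at hω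
    have hNpos' : (0:ℝ) < N := by exact_mod_cast hNpos
    have := (mul_lt_mul_iff_of_pos_left hNpos').mpr hω
    rw [← mul_assoc, mul_inv_cancel₀ hNpos'.ne', one_mul] at this
    have : ∑ x ∈ Bf, X x ω ≤ N * (p₁ / 2) := le_of_lt this
    calc (∑ x ∈ Bf, X x) ω = ∑ x ∈ Bf, X x ω := by simp
    _ ≤ N * (p₁ / 2) := this
    _ = p₁ * N / 2 := by ring
  -- integrability of the exponential
  have h_int : MeasureTheory.Integrable
      (fun ω => Real.exp (t * (∑ x ∈ Bf, X x) ω)) P := by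
    refine MeasureTheory.Integrable.mono' (MeasureTheory.integrable_const 1)
      ((hSmeas.const_mul t).exp).aestronglyMeasurable ?_
    refine Filter.Eventually.of_forall fun ω => ?_
    rw [Real.norm_eq_abs, abs_of_pos (Real.exp_pos _)]
    rw [← Real.exp_zero]
    apply Real.exp_le_exp.mpr
    apply mul_nonpos_of_nonpos_of_nonneg ht
    have : (∑ x ∈ Bf, X x) ω = ∑ x ∈ Bf, X x ω := by simp
    rw [this]
    exact Finset.sum_nonneg fun x _ => hXnn x _
  -- Chernoff
  have hchern := ProbabilityTheory.measure_le_le_exp_mul_mgf (μ := P)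
    (X := ∑ x ∈ Bf, X x) (p₁ * N / 2) ht h_int
  -- compute the mgf
  have hind : ProbabilityTheory.iIndepFun X P :=
    C.indep.comp _ (fun _ => occInd_meas)
  have hmgf : ProbabilityTheory.mgf (∑ x ∈ Bf, X x) P t = (1 - p₁ / 2) ^ N := by
    rw [hind.mgf_sum hXmeas]
    have : ∀ x ∈ Bf, ProbabilityTheory.mgf (X x) P t = 1 - p₁ / 2 := by
      intro x _
      rw [hX]
      rw [mgf_occInd C hp₁ x t, ht_def, Real.exp_neg, Real.exp_log two_pos]
      ring
    rw [Finset.prod_congr rfl this, Finset.prod_const, hN]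
  have hq0 : (0:ℝ) ≤ 1 - p₁ / 2 := by linarith
  have hqe : 1 - p₁ / 2 ≤ Real.exp (-(p₁/2)) := by
    have := Real.add_one_le_exp (-(p₁/2)); linarith
  have hbound : Real.exp (-t * (p₁ * N / 2)) * (1 - p₁/2) ^ N ≤
      Real.exp (-(p₁ * (1 - Real.log 2) / 2) * N) := by
    have h1 : (1 - p₁/2)^N ≤ Real.exp (-(p₁/2) * N) := by
      calc (1 - p₁/2)^N ≤ (Real.exp (-(p₁/2)))^N := pow_le_pow_left₀ hq0 hqe N
      _ = Real.exp (-(p₁/2) * N) := by rw [← Real.exp_nat_mul, mul_comm]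
    calc Real.exp (-t * (p₁ * N / 2)) * (1 - p₁/2) ^ N
        ≤ Real.exp (-t * (p₁ * N / 2)) * Real.exp (-(p₁/2) * N) :=
          mul_le_mul_of_nonneg_left h1 (Real.exp_pos _).le
      _ = Real.exp (-t * (p₁*N/2) + (-(p₁/2)*N)) := (Real.exp_add _ _).symm
      _ = Real.exp (-(p₁ * (1 - Real.log 2)/2) * N) := by rw [ht_def]; congr 1; ring
  calc P {ω | Rdens (fun x => C.η x ω) B < p₁ / 2}
      ≤ P {ω | (∑ x ∈ Bf, X x) ω ≤ p₁ * N / 2} := measure_mono hsub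
    _ = ENNReal.ofReal ((P {ω | (∑ x ∈ Bf, X x) ω ≤ p₁ * N / 2}).toReal) :=
        (ENNReal.ofReal_toReal (measure_ne_top _ _)).symm
    _ ≤ ENNReal.ofReal (Real.exp (-(p₁ * (1 - Real.log 2) / 2) * (Nat.card B : ℝ))) := by
        apply ENNReal.ofReal_le_ofReal
        rw [hNcard]
        exact (hchern.trans_eq (by rw [hmgf])).trans hbound

end Chernoff2

section Geometry

variable {d : ℕ}

lemma euclNorm_nonneg (x : Fin d → ℤ) : 0 ≤ euclNorm x := Real.sqrt_nonneg _

lemma coord_le_euclNorm (x : Fin d → ℤ) (i : Fin d) : |((x i : ℝ))| ≤ euclNorm x := by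
  rw [← Real.sqrt_sq_eq_abs]
  apply Real.sqrt_le_sqrt
  exact Finset.single_le_sum (f := fun j => ((x j : ℝ))^2) (fun j _ => sq_nonneg _)
    (Finset.mem_univ i)

lemma euclNorm_le (x : Fin d → ℤ) (k : ℝ) (hk : 0 ≤ k) (hco : ∀ i, |((x i : ℝ))| ≤ k) :
    euclNorm x ≤ k * Real.sqrt d := by
  unfold euclNorm
  have : ∑ i, ((x i : ℝ))^2 ≤ ∑ _i : Fin d, k^2 :=
    Finset.sum_le_sum fun i _ => by
      rw [← sq_abs]; exact pow_le_pow_left₀ (abs_nonneg _) (hco i) 2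
  apply (Real.sqrt_le_sqrt this).trans
  rw [Finset.sum_const, Finset.card_univ, Fintype.card_fin, nsmul_eq_mul]
  rw [Real.sqrt_mul (by positivity), Real.sqrt_sq hk, mul_comm]

lemma latticeBall_finite (c : Fin d → ℤ) (r : ℝ) : (latticeBall c r).Finite := by
  apply Set.Finite.subset (Set.Finite.pi
    (t := fun i : Fin d => Set.Icc (c i - ⌈r⌉) (c i + ⌈r⌉)) (fun i => Set.finite_Icc _ _))
  intro x hx
  simp only [Set.mem_pi, Set.mem_univ, Set.mem_Icc, forall_true_left]
  intro i
  have h1 : |((x i - c i : ℤ) : ℝ)| ≤ r := by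
    have := coord_le_euclNorm (x - c) i
    simpa using this.trans hx
  rw [abs_le] at h1
  have hc : ((x i - c i : ℤ) : ℝ) ≤ ⌈r⌉ := h1.2.trans (Int.le_ceil r)
  have hc2 : -(⌈r⌉ : ℝ) ≤ ((x i - c i : ℤ) : ℝ) := le_trans (by linarith [Int.le_ceil r]) h1.1
  constructor
  · have : -(⌈r⌉ : ℤ) ≤ x i - c i := by exact_mod_cast hc2
    omega
  · have : x i - c i ≤ ⌈r⌉ := by exact_mod_cast hc
    omega

lemma mem_latticeBall_self (c : Fin d → ℤ) {r : ℝ} (hr : 0 ≤ r) : c ∈ latticeBall c r := by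
  show euclNorm (c - c) ≤ r
  rw [sub_self]
  unfold euclNorm
  have : ∀ i : Fin d, (((0 : Fin d → ℤ) i : ℝ))^2 = 0 := by intro i; simp
  rw [Finset.sum_congr rfl fun i _ => this i, Finset.sum_const, smul_zero, Real.sqrt_zero]
  exact hr

/-- cube based at `b` with side `k` -/
noncomputable def cubeF (b : Fin d → ℤ) (k : ℕ) : Finset (Fin d → ℤ) :=
  Fintype.piFinset fun i => Finset.Icc (b i) (b i + k)

lemma cubeF_card (b : Fin d → ℤ) (k : ℕ) : (cubeF b k).card = (k+1)^d := by
  rw [cubeF, Fintype.card_piFinset]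
  have : ∀ i : Fin d, (Finset.Icc (b i) (b i + (k:ℤ))).card = k + 1 := by
    intro i
    rw [Int.card_Icc]
    omega
  rw [Finset.prod_congr rfl fun i _ => this i, Finset.prod_const, Finset.card_univ,
    Fintype.card_fin]

lemma cubeF_subset_ball (b : Fin d → ℤ) (k : ℕ) (r : ℝ) (hk : (k : ℝ) * Real.sqrt d ≤ r) :
    ↑(cubeF b k) ⊆ latticeBall b r := by
  intro x hx
  simp only [cubeF, Finset.coe_sort_coe, Finset.mem_coe, Fintype.mem_piFinset,
    Finset.mem_Icc] at hx
  have : euclNorm (x - b) ≤ (k:ℝ) * Real.sqrt d := by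
    apply euclNorm_le _ _ (Nat.cast_nonneg k)
    intro i
    have h := hx i
    have h0 : (0:ℤ) ≤ x i - b i := by omega
    have h1 : x i - b i ≤ k := by omega
    simp only [Pi.sub_apply]
    rw [abs_of_nonneg (by exact_mod_cast h0)]
    exact_mod_cast h1
  exact Set.mem_setOf_eq ▸ this.trans hk

lemma ball_card_lb (hd : 1 ≤ d) (c : Fin d → ℤ) (r : ℝ) (hr : 0 ≤ r) :
    (r / Real.sqrt d) ^ d ≤ (Nat.card (latticeBall c r) : ℝ) := by
  have hsd : (0:ℝ) < Real.sqrt d := Real.sqrt_pos.mpr (by exact_mod_cast hd)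
  set k : ℕ := ⌊r / Real.sqrt d⌋₊ with hk
  have hk1 : (k : ℝ) * Real.sqrt d ≤ r := by
    have : (k : ℝ) ≤ r / Real.sqrt d := Nat.floor_le (by positivity)
    calc (k:ℝ) * Real.sqrt d ≤ (r / Real.sqrt d) * Real.sqrt d :=
      mul_le_mul_of_nonneg_right this hsd.le
    _ = r := div_mul_cancel₀ _ hsd.ne'
  have hsub := cubeF_subset_ball c k r hk1
  have hcard : (k+1)^d ≤ Nat.card (latticeBall c r) := by
    rw [Nat.card_coe_set_eq]
    calc (k+1)^d = (cubeF c k).card := (cubeF_card c k).symm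
    _ = (↑(cubeF c k) : Set (Fin d → ℤ)).ncard := (Set.ncard_coe_finset _).symm
    _ ≤ (latticeBall c r).ncard := Set.ncard_le_ncard hsub (latticeBall_finite c r)
  calc (r / Real.sqrt d)^d ≤ ((k:ℝ)+1)^d := by
        apply pow_le_pow_left₀ (by positivity)
        exact (Nat.lt_floor_add_one _).le
  _ = (((k+1)^d : ℕ) : ℝ) := by push_cast; ring
  _ ≤ (Nat.card (latticeBall c r) : ℝ) := by exact_mod_cast hcard

end Geometry

section Geometry2

variable {d : ℕ}

lemma Dball_eq_latticeBall (n : ℝ) (i : ℕ) :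
    Dball d n i = latticeBall 0 ((i : ℝ) * n ^ ((1 : ℝ)/2 + epsd d)) := by
  ext x
  simp [Dball, latticeBall, sub_zero]

lemma Dball_finite (n : ℝ) (i : ℕ) : (Dball d n i).Finite := by
  rw [Dball_eq_latticeBall]; exact latticeBall_finite _ _

/-- The lattice cube `[-b, b]^d`. -/
noncomputable def boxF (d b : ℕ) : Finset (Fin d → ℤ) := Fintype.piFinset fun _ => Finset.Icc (-(b:ℤ)) b

lemma boxF_card (b : ℕ) : (boxF d b).card = (2*b+1)^d := by
  rw [boxF, Fintype.card_piFinset]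
  have : ∀ i : Fin d, (Finset.Icc (-(b:ℤ)) (b:ℤ)).card = 2*b + 1 := by
    intro i; rw [Int.card_Icc]; omega
  rw [Finset.prod_congr rfl fun i _ => this i, Finset.prod_const, Finset.card_univ,
    Fintype.card_fin]

lemma mem_boxF {x : Fin d → ℤ} {M : ℝ} (hx : euclNorm x ≤ M) {b : ℕ} (hbM : M ≤ (b:ℝ)) :
    x ∈ boxF d b := by
  simp only [boxF, Fintype.mem_piFinset, Finset.mem_Icc]
  intro i
  have h1 : |((x i : ℝ))| ≤ (b:ℝ) := (coord_le_euclNorm x i).trans (hx.trans hbM)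
  rw [abs_le] at h1
  constructor
  · exact_mod_cast h1.1
  · exact_mod_cast h1.2

set_option maxHeartbeats 1000000 in
lemma annulus_card_lb (hd : 1 ≤ d) (n : ℝ) (i : ℕ) (hi2 : 2 ≤ i) (hid : i ≤ d)
    (hR : 8 * ((d:ℝ)+1) ≤ n ^ ((1:ℝ)/2 + epsd d)) :
    (n ^ ((1:ℝ)/2 + epsd d) / (4*((d:ℝ)+1))) ^ d ≤
      (Nat.card ↑(Dball d n i \ Dball d n (i-1)) : ℝ) := by
  have hd1 : (1:ℝ) ≤ d := by exact_mod_cast hd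
  set R : ℝ := n ^ ((1:ℝ)/2 + epsd d) with hRdef
  set D1 : ℝ := (d:ℝ) + 1 with hD1
  have hD1pos : (0:ℝ) < D1 := by rw [hD1]; positivity
  have hD12 : (2:ℝ) ≤ D1 := by rw [hD1]; linarith
  have hRpos : (0:ℝ) < R := lt_of_lt_of_le (by positivity) hR
  set f : ℕ := ⌊R/(2*D1)⌋₊ with hf
  have hf4 : 4 ≤ f := by
    rw [hf]
    apply Nat.le_floor
    rw [le_div_iff₀ (by positivity)]
    push_cast
    linarith
  set k : ℕ := f - 2 with hk
  have hk2 : (k:ℝ) + 2 = (f:ℝ) := by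
    rw [hk]; push_cast [Nat.cast_sub (by omega : 2 ≤ f)]; ring
  have hkub : (k:ℝ) + 2 ≤ R/(2*D1) := by
    rw [hk2]; exact Nat.floor_le (by positivity)
  have hklb : R/(4*D1) ≤ (k:ℝ) + 1 := by
    have h1 : R/(2*D1) < (f:ℝ) + 1 := Nat.lt_floor_add_one _
    have h2 : (2:ℝ) ≤ R/(4*D1) := by
      rw [le_div_iff₀ (by positivity)]; linarith
    have h3 : R/(2*D1) = 2 * (R/(4*D1)) := by
      field_simp
      ring
    linarith
  set m₀ : ℤ := ⌈((i:ℝ)-1)*R⌉ + 1 with hm₀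
  have hi2' : (2:ℝ) ≤ (i:ℝ) := by exact_mod_cast hi2
  have hid' : ((i:ℝ)) ≤ d := by exact_mod_cast hid
  have hm₀lb : ((i:ℝ)-1)*R < (m₀:ℝ) := by
    rw [hm₀]; push_cast
    have := Int.le_ceil (((i:ℝ)-1)*R)
    linarith
  have hm₀ub : (m₀:ℝ) ≤ ((i:ℝ)-1)*R + 2 := by
    rw [hm₀]; push_cast
    have := Int.ceil_lt_add_one (((i:ℝ)-1)*R)
    linarith
  have hm₀pos : (0:ℝ) < (m₀:ℝ) := by nlinarith
  set j₀ : Fin d := ⟨0, hd⟩ with hj₀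
  set b : Fin d → ℤ := fun j => if j = j₀ then m₀ else 0 with hb
  -- the cube is inside the annulus
  have hsub : ↑(cubeF b k) ⊆ Dball d n i \ Dball d n (i-1) := by
    intro x hx
    simp only [cubeF, Finset.coe_sort_coe, Finset.mem_coe, Fintype.mem_piFinset,
      Finset.mem_Icc] at hx
    have hxj₀ : m₀ ≤ x j₀ ∧ x j₀ ≤ m₀ + k := by
      have := hx j₀; simpa [hb] using this
    have hxother : ∀ j, j ≠ j₀ → 0 ≤ x j ∧ x j ≤ k := by
      intro j hj
      have := hx j; simpa [hb, hj] using this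
    constructor
    · -- in Dball i
      show euclNorm x ≤ (i:ℝ) * R
      have hsum : ∑ j, ((x j : ℝ))^2 ≤ (((i:ℝ)-1)*R + ((k:ℝ)+2))^2 + ((d:ℝ)-1)*(k:ℝ)^2 := by
        have hsplit : ∑ j, ((x j : ℝ))^2
            = ((x j₀ : ℝ))^2 + ∑ j ∈ Finset.univ.erase j₀, ((x j : ℝ))^2 :=
          (Finset.add_sum_erase Finset.univ (fun j => ((x j : ℝ))^2)
            (Finset.mem_univ j₀)).symm
        rw [hsplit]
        have h1 : ((x j₀ : ℝ))^2 ≤ (((i:ℝ)-1)*R + ((k:ℝ)+2))^2 := by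
          have hub : ((x j₀ : ℝ)) ≤ ((i:ℝ)-1)*R + ((k:ℝ)+2) := by
            have : ((x j₀ : ℝ)) ≤ (m₀:ℝ) + k := by exact_mod_cast hxj₀.2
            linarith
          have hlb : (0:ℝ) ≤ ((x j₀ : ℝ)) := by
            have : (m₀:ℝ) ≤ ((x j₀ : ℝ)) := by exact_mod_cast hxj₀.1
            linarith
          nlinarith
        have h2 : ∑ j ∈ Finset.univ.erase j₀, ((x j : ℝ))^2 ≤ ((d:ℝ)-1)*(k:ℝ)^2 := by
          have hbd : ∀ j ∈ Finset.univ.erase j₀, ((x j : ℝ))^2 ≤ (k:ℝ)^2 := by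
            intro j hj
            have hj' : j ≠ j₀ := (Finset.mem_erase.mp hj).1
            obtain ⟨ha, hb'⟩ := hxother j hj'
            have ha' : (0:ℝ) ≤ (x j : ℝ) := by exact_mod_cast ha
            have hb'' : ((x j : ℝ)) ≤ (k:ℝ) := by exact_mod_cast hb'
            nlinarith
          calc ∑ j ∈ Finset.univ.erase j₀, ((x j : ℝ))^2
              ≤ ∑ _j ∈ Finset.univ.erase j₀, (k:ℝ)^2 := Finset.sum_le_sum hbd
            _ = ((d:ℝ)-1)*(k:ℝ)^2 := by
                rw [Finset.sum_const, Finset.card_erase_of_mem (Finset.mem_univ j₀),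
                  Finset.card_univ, Fintype.card_fin, nsmul_eq_mul]
                have : ((d - 1 : ℕ) : ℝ) = (d:ℝ) - 1 := by
                  push_cast [Nat.cast_sub hd]; ring
                rw [this]
        linarith
      have harith : (((i:ℝ)-1)*R + ((k:ℝ)+2))^2 + ((d:ℝ)-1)*(k:ℝ)^2 ≤ ((i:ℝ)*R)^2 := by
        have hs0 : (0:ℝ) < (k:ℝ) + 2 := by positivity
        have hsR : 2*D1*((k:ℝ)+2) ≤ R := by
          have := (le_div_iff₀ (by positivity : (0:ℝ) < 2*D1)).mp hkub
          linarith
        have hiD : (i:ℝ) - 1 ≤ D1 := by linarith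
        have e1 : 2*((i:ℝ)-1)*R*((k:ℝ)+2) ≤ R^2 := by
          have h4 : 2*((i:ℝ)-1)*((k:ℝ)+2) ≤ 2*D1*((k:ℝ)+2) :=
            mul_le_mul_of_nonneg_right (by linarith) (by positivity)
          have h5 : 2*((i:ℝ)-1)*((k:ℝ)+2) ≤ R := h4.trans hsR
          have h6 : 0 ≤ 2*((i:ℝ)-1)*((k:ℝ)+2) :=
            mul_nonneg (by linarith) hs0.le
          calc 2*((i:ℝ)-1)*R*((k:ℝ)+2) = (2*((i:ℝ)-1)*((k:ℝ)+2)) * R := by ring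
            _ ≤ R * R := mul_le_mul_of_nonneg_right h5 hRpos.le
            _ = R^2 := by ring
        have hsq : (2*D1*((k:ℝ)+2))^2 ≤ R^2 := by
          apply pow_le_pow_left₀ (by positivity) hsR
        have e2 : D1 * ((k:ℝ)+2)^2 ≤ R^2/8 := by
          nlinarith [mul_nonneg (mul_nonneg (by linarith : (0:ℝ) ≤ D1 - 2) hD1pos.le)
            (sq_nonneg ((k:ℝ)+2))]
        have e3 : ((k:ℝ)+2)^2 + ((d:ℝ)-1)*(k:ℝ)^2 ≤ D1 * ((k:ℝ)+2)^2 := by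
          have hks : (k:ℝ)^2 ≤ ((k:ℝ)+2)^2 := by nlinarith [Nat.cast_nonneg (α := ℝ) k]
          have : ((d:ℝ)-1)*(k:ℝ)^2 ≤ ((d:ℝ)-1)*((k:ℝ)+2)^2 :=
            mul_le_mul_of_nonneg_left hks (by linarith)
          nlinarith
        calc (((i:ℝ)-1)*R + ((k:ℝ)+2))^2 + ((d:ℝ)-1)*(k:ℝ)^2
            = ((i:ℝ)-1)^2*R^2 + 2*((i:ℝ)-1)*R*((k:ℝ)+2)
              + (((k:ℝ)+2)^2 + ((d:ℝ)-1)*(k:ℝ)^2) := by ring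
          _ ≤ ((i:ℝ)-1)^2*R^2 + R^2 + (R^2/8 + R^2/8) := by
              have e4 : (↑k + 2) ^ 2 + ((d:ℝ) - 1) * (k:ℝ) ^ 2 ≤ R^2/8 := e3.trans e2
              have e5 : (0:ℝ) ≤ R^2 := sq_nonneg R
              linarith
          _ ≤ ((i:ℝ)*R)^2 := by
              nlinarith [mul_nonneg (by linarith : (0:ℝ) ≤ 2*(i:ℝ)-4) (sq_nonneg R)]
      unfold euclNorm
      calc Real.sqrt (∑ j, ((x j : ℝ))^2) ≤ Real.sqrt (((i:ℝ)*R)^2) :=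
            Real.sqrt_le_sqrt (hsum.trans harith)
        _ = (i:ℝ)*R := Real.sqrt_sq (by positivity)
    · -- not in Dball (i-1)
      intro hmem
      have hcast : (((i-1 : ℕ)):ℝ) = (i:ℝ) - 1 := by
        push_cast [Nat.cast_sub (by omega : 1 ≤ i)]; ring
      have hle : euclNorm x ≤ ((i:ℝ)-1) * R := by
        have := hmem
        simp only [Dball, Set.mem_setOf_eq] at this
        rwa [hcast] at this
      have hge : (m₀:ℝ) ≤ euclNorm x := by
        have h1 : |((x j₀ : ℝ))| ≤ euclNorm x := coord_le_euclNorm x j₀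
        have h2 : (m₀:ℝ) ≤ ((x j₀ : ℝ)) := by exact_mod_cast hxj₀.1
        calc (m₀:ℝ) ≤ (x j₀ : ℝ) := h2
          _ ≤ |((x j₀ : ℝ))| := le_abs_self _
          _ ≤ euclNorm x := h1
      linarith
  -- cardinality
  have hfin : (Dball d n i \ Dball d n (i-1)).Finite :=
    (Dball_finite n i).subset Set.diff_subset
  have hcard : (k+1)^d ≤ Nat.card ↑(Dball d n i \ Dball d n (i-1)) := by
    rw [Nat.card_coe_set_eq]
    calc (k+1)^d = (cubeF b k).card := (cubeF_card b k).symm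
    _ = (↑(cubeF b k) : Set (Fin d → ℤ)).ncard := (Set.ncard_coe_finset _).symm
    _ ≤ (Dball d n i \ Dball d n (i-1)).ncard := Set.ncard_le_ncard hsub hfin
  calc (R / (4*D1))^d ≤ ((k:ℝ)+1)^d := pow_le_pow_left₀ (by positivity) hklb d
  _ = (((k+1)^d : ℕ) : ℝ) := by push_cast; ring
  _ ≤ _ := by exact_mod_cast hcard

end Geometry2

section CondLemmas

variable {d : ℕ} {Ω : Type} [MeasurableSpace Ω] {P : Measure Ω} [IsProbabilityMeasure P]

lemma meas_empty_sites (C : IIDConfig d Ω P) {k₀ : ℕ} (xs : Fin k₀ → Fin d → ℤ)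
    (hinj : Function.Injective xs) :
    P {ω | ∀ i, C.η (xs i) ω = 0} = (P {ω | C.η 0 ω = 0}) ^ k₀ := by
  classical
  have hq : ∀ y : Fin d → ℤ, P (C.η y ⁻¹' {0}) = P (C.η 0 ⁻¹' {0}) := by
    intro y
    rw [← Measure.map_apply (C.meas_η y) (measurableSet_singleton 0), C.η_ident y,
      Measure.map_apply (C.meas_η 0) (measurableSet_singleton 0)]
  set S : Finset (Fin d → ℤ) := Finset.image xs Finset.univ with hS
  have hset : {ω | ∀ i, C.η (xs i) ω = 0} = ⋂ y ∈ S, C.η y ⁻¹' ({0} : Set ℕ) := by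
    ext ω
    simp only [Set.mem_setOf_eq, Set.mem_iInter, Set.mem_preimage, Set.mem_singleton_iff,
      hS, Finset.mem_image, Finset.mem_univ, true_and]
    constructor
    · rintro hω y ⟨i, rfl⟩
      exact hω i
    · intro hω i
      exact hω (xs i) ⟨i, rfl⟩
  have hprod := C.indep.measure_inter_preimage_eq_mul S
    (sets := fun _ => ({0} : Set ℕ)) (fun _ _ => measurableSet_singleton 0)
  rw [hset, hprod, Finset.prod_congr rfl (fun y _ => hq y), Finset.prod_const]
  have hcard : S.card = k₀ := by
    rw [hS, Finset.card_image_of_injective _ hinj, Finset.card_univ, Fintype.card_fin]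
  rw [hcard]
  rfl

/-- the conditional lower bound reduction -/
lemma cond_lower_bound {s G : Set Ω} (hs : MeasurableSet s) (hs0 : P s ≠ 0)
    {ε : ℝ} (hbad : P (Gᶜ) ≤ ENNReal.ofReal ε * P s) :
    1 - ENNReal.ofReal ε ≤ P[G | s] := by
  have hsfin : P s ≠ ⊤ := measure_ne_top _ _
  have h1 : P[G | s] = (P s)⁻¹ * P (s ∩ G) := ProbabilityTheory.cond_apply hs P G
  have h2 : s \ Gᶜ ⊆ s ∩ G := by
    intro ω hω
    exact ⟨hω.1, not_not.mp hω.2⟩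
  have h3 : P s - P (Gᶜ) ≤ P (s ∩ G) :=
    le_trans le_measure_diff (measure_mono h2)
  have h4 : P s - ENNReal.ofReal ε * P s ≤ P (s ∩ G) :=
    le_trans (tsub_le_tsub_left hbad _) h3
  have h5 : (1 - ENNReal.ofReal ε) * P s ≤ P (s ∩ G) := by
    rw [ENNReal.sub_mul (fun _ _ => hsfin), one_mul]
    exact h4
  rw [h1]
  calc 1 - ENNReal.ofReal ε
      = (1 - ENNReal.ofReal ε) * ((P s)⁻¹ * P s) := by
        rw [ENNReal.inv_mul_cancel hs0 hsfin, mul_one]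
    _ = (P s)⁻¹ * ((1 - ENNReal.ofReal ε) * P s) := by ring
    _ ≤ (P s)⁻¹ * P (s ∩ G) := mul_le_mul_right h5 _

end CondLemmas

section Analytic

lemma eventually_rpow_le (h c' Cst δ γ : ℝ) (hh : 0 < h) (hc' : 0 < c') (hδγ : δ < γ) :
    ∀ᶠ m : ℕ in Filter.atTop, Cst * ((m:ℝ)/h) ^ δ ≤ c' * ((m:ℝ)/h) ^ γ := by
  have hu : Filter.Tendsto (fun m : ℕ => (m:ℝ)/h) Filter.atTop Filter.atTop :=
    (tendsto_natCast_atTop_atTop (R := ℝ)).atTop_div_const hh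
  have hpow : Filter.Tendsto (fun m : ℕ => ((m:ℝ)/h) ^ (γ - δ)) Filter.atTop Filter.atTop :=
    (tendsto_rpow_atTop (by linarith)).comp hu
  have h1 : ∀ᶠ m : ℕ in Filter.atTop, Cst/c' ≤ ((m:ℝ)/h) ^ (γ-δ) :=
    hpow.eventually_ge_atTop _
  have h2 : ∀ᶠ m : ℕ in Filter.atTop, (0:ℝ) < (m:ℝ)/h := hu.eventually_gt_atTop 0
  filter_upwards [h1, h2] with m hm hm0
  have key : Cst ≤ c' * ((m:ℝ)/h)^(γ-δ) := by
    rw [← div_le_iff₀' hc']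
    exact hm
  calc Cst * ((m:ℝ)/h)^δ ≤ (c' * ((m:ℝ)/h)^(γ-δ)) * ((m:ℝ)/h)^δ :=
        mul_le_mul_of_nonneg_right key (Real.rpow_nonneg hm0.le _)
  _ = c' * ((m:ℝ)/h)^γ := by
      rw [mul_assoc, ← Real.rpow_add hm0, sub_add_cancel]

lemma eventually_main (h c L γ' β γ : ℝ) (d : ℕ) (hh : 0 < h) (hc : 0 < c) (hγ : 0 < γ)
    (hγ' : γ' < γ) (hβ : β < γ) (hL : 0 ≤ L) :
    ∀ᶠ m : ℕ in Filter.atTop,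
      Real.log 2 + d * Real.log (5 * ((m:ℝ)/h)) + (m:ℝ) ^ β + L * ((m:ℝ)/h) ^ γ' ≤
        c * ((m:ℝ)/h) ^ γ := by
  have hu : Filter.Tendsto (fun m : ℕ => (m:ℝ)/h) Filter.atTop Filter.atTop :=
    (tendsto_natCast_atTop_atTop (R := ℝ)).atTop_div_const hh
  have h2 : ∀ᶠ m : ℕ in Filter.atTop, (0:ℝ) < (m:ℝ)/h := hu.eventually_gt_atTop 0
  have e1 := eventually_rpow_le h (c/4) (Real.log 2 + d * Real.log 5) 0 γ hh (by linarith) hγ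
  have e2 := eventually_rpow_le h (c/4) (2*(d:ℝ)/γ) (γ/2) γ hh (by linarith) (by linarith)
  have e3 := eventually_rpow_le h (c/4) (h^β) β γ hh (by linarith) hβ
  have e4 := eventually_rpow_le h (c/4) L γ' γ hh (by linarith) hγ'
  filter_upwards [h2, e1, e2, e3, e4] with m hm0 he1 he2 he3 he4
  set u : ℝ := (m:ℝ)/h with hudef
  have hm' : (m:ℝ) = u * h := by
    rw [hudef]; field_simp
  clear_value u
  have hlog : Real.log (5*u) ≤ Real.log 5 + (2/γ) * u^(γ/2) := by
    rw [Real.log_mul (by norm_num) hm0.ne']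
    have h5 : Real.log u ≤ (2/γ) * u^(γ/2) := by
      have hl : Real.log (u^(γ/2)) = (γ/2) * Real.log u := Real.log_rpow hm0 _
      have hl2 : Real.log (u^(γ/2)) ≤ u^(γ/2) - 1 :=
        Real.log_le_sub_one_of_pos (Real.rpow_pos_of_pos hm0 _)
      have hγ2 : (0:ℝ) < γ/2 := by linarith
      have : (γ/2) * Real.log u ≤ u^(γ/2) := by
        rw [← hl]; linarith [Real.rpow_nonneg hm0.le (γ/2)]
      calc Real.log u = (2/γ) * ((γ/2) * Real.log u) := by field_simp
      _ ≤ (2/γ) * u^(γ/2) := by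
          apply mul_le_mul_of_nonneg_left this (by positivity)
    linarith
  have hmb : (m:ℝ)^β = h^β * u^β := by
    rw [hm', Real.mul_rpow (by positivity) hh.le, mul_comm]
  have hd0 : (0:ℝ) ≤ d := Nat.cast_nonneg d
  have hdlog : (d:ℝ) * Real.log (5*u) ≤ (d:ℝ) * Real.log 5 + (2*(d:ℝ)/γ) * u^(γ/2) := by
    calc (d:ℝ) * Real.log (5*u) ≤ (d:ℝ) * (Real.log 5 + (2/γ) * u^(γ/2)) :=
          mul_le_mul_of_nonneg_left hlog hd0
    _ = (d:ℝ) * Real.log 5 + (2*(d:ℝ)/γ) * u^(γ/2) := by ring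
  have hu0 : u^(0:ℝ) = 1 := Real.rpow_zero u
  have he1' : Real.log 2 + (d:ℝ) * Real.log 5 ≤ (c/4) * u^γ := by
    calc Real.log 2 + (d:ℝ) * Real.log 5
        = (Real.log 2 + (d:ℝ) * Real.log 5) * u^(0:ℝ) := by rw [hu0, mul_one]
    _ ≤ (c/4) * u^γ := he1
  have he3' : (m:ℝ)^β ≤ (c/4) * u^γ := by rw [hmb]; exact he3
  calc Real.log 2 + (d:ℝ) * Real.log (5*u) + (m:ℝ)^β + L*u^γ'
      ≤ (Real.log 2 + (d:ℝ)*Real.log 5) + (2*(d:ℝ)/γ * u^(γ/2)) + (m:ℝ)^β + L*u^γ' := by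
        linarith [hdlog]
    _ ≤ (c/4)*u^γ + ((c/4)*u^γ) + ((c/4)*u^γ) + ((c/4)*u^γ) :=
        add_le_add (add_le_add (add_le_add he1' he2) he3') he4
    _ = c * u^γ := by ring

end Analytic

section Core

open Filter

variable {d : ℕ} {Ω : Type} [MeasurableSpace Ω] {P : Measure Ω} [IsProbabilityMeasure P]

set_option maxHeartbeats 1600000 in
lemma core_estimate (hd : 1 ≤ d) (C : IIDConfig d Ω P)
    (p₁ : ℝ) (hp₁ : p₁ = (P {ω | 1 ≤ C.η 0 ω}).toReal) (hp₁pos : 0 < p₁) (hp₁le : p₁ ≤ 1)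
    (h : ℝ) (hh : 0 < h) (ρexp μexp γ γ' : ℝ)
    (hγ0 : 0 < γ) (hγ'γ : γ' < γ)
    (H1 : ∀ m : ℕ, 1 ≤ (m:ℝ)/h → ((ndm d h m ^ ρexp : ℝ))^d = ((m:ℝ)/h)^γ)
    (H2 : ∀ m : ℕ, 1 ≤ (m:ℝ)/h → ((nhat d h m : ℝ))^d = ((m:ℝ)/h)^γ')
    (H3 : ∀ m : ℕ, 1 ≤ (m:ℝ)/h → ndm d h m ^ μexp ≤ (m:ℝ)/h)
    (H5 : ∀ m : ℕ, 1 ≤ (m:ℝ)/h → ndm d h m ^ ρexp ≤ ndm d h m ^ ((1:ℝ)/2 + epsd d))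
    (H6 : Tendsto (fun m : ℕ => ndm d h m ^ ((1:ℝ)/2 + epsd d)) atTop atTop)
    (H0 : ∀ m : ℕ, 0 ≤ ndm d h m)
    (Hgood : ∀ m : ℕ, ∀ ω : Ω,
      (∀ c : Fin d → ℤ, euclNorm c ≤ ndm d h m ^ μexp →
        p₁/2 ≤ Rdens (fun x => C.η x ω) (latticeBall c (ndm d h m ^ ρexp))) →
      (∀ i : ℕ, 2 ≤ i → i ≤ d/2 →
        p₁/2 ≤ Rdens (fun x => C.η x ω) (Dball d (ndm d h m) i \ Dball d (ndm d h m) (i-1))) →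
      IsGood d p₁ h m (fun x => C.η x ω)) :
    ∃ α₃ β₃ : ℝ, 0 < α₃ ∧ 0 < β₃ ∧
      ∀ m : ℕ, 1 ≤ m →
        ∀ k₀ : ℕ, (k₀ : ℝ) ≤ (nhat d h m) ^ d →
          ∀ xs : Fin k₀ → Fin d → ℤ, Function.Injective xs →
            0 < P {ω | ∀ i, C.η (xs i) ω = 0} →
            1 - ENNReal.ofReal (α₃ * Real.exp (-(m : ℝ) ^ β₃)) ≤
              P[{ω | IsGood d p₁ h m (fun x => C.η x ω)} | {ω | ∀ i, C.η (xs i) ω = 0}] := by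
  classical
  set β := γ/2 with hβdef
  have hβ0 : 0 < β := by rw [hβdef]; linarith
  set c₁ : ℝ := p₁ * (1 - Real.log 2)/2 with hc₁def
  have hlog2 : Real.log 2 < 1 := by
    have := Real.log_two_lt_d9
    linarith
  have hc₁ : 0 < c₁ := by
    rw [hc₁def]
    have : 0 < 1 - Real.log 2 := by linarith
    positivity
  have hsd : 0 < Real.sqrt d := Real.sqrt_pos.mpr (by exact_mod_cast hd)
  set K : ℝ := Real.sqrt d + 4*((d:ℝ)+1) with hKdef
  have hK0 : 0 < K := by rw [hKdef]; positivity
  have hKd : 0 < K^d := pow_pos hK0 d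
  set c : ℝ := c₁ / K^d with hcdef
  have hc : 0 < c := div_pos hc₁ hKd
  set p₀ : ℝ := (P {ω | C.η 0 ω = 0}).toReal with hp₀def
  have hp₀le : p₀ ≤ 1 := by
    rw [hp₀def]
    exact ENNReal.toReal_le_of_le_ofReal one_pos.le (by simpa using prob_le_one)
  have hp₀0 : 0 ≤ p₀ := ENNReal.toReal_nonneg
  set L : ℝ := -Real.log p₀ with hLdef
  have hL : 0 ≤ L := by
    rw [hLdef, neg_nonneg]
    exact Real.log_nonpos hp₀0 hp₀le
  have hu : Tendsto (fun m : ℕ => (m:ℝ)/h) atTop atTop :=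
    (tendsto_natCast_atTop_atTop (R := ℝ)).atTop_div_const hh
  have Emain := eventually_main h c L γ' β γ d hh hc hγ0 hγ'γ (by rw [hβdef]; linarith) hL
  have Eu1 : ∀ᶠ m : ℕ in atTop, 1 ≤ (m:ℝ)/h := hu.eventually_ge_atTop 1
  have Eud : ∀ᶠ m : ℕ in atTop, (d:ℝ) ≤ (m:ℝ)/h := hu.eventually_ge_atTop d
  have ER : ∀ᶠ m : ℕ in atTop, 8*((d:ℝ)+1) ≤ ndm d h m ^ ((1:ℝ)/2+epsd d) :=
    H6.eventually_ge_atTop _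
  obtain ⟨M₀, hM₀⟩ := Filter.eventually_atTop.mp (((Emain.and Eu1).and (Eud.and ER)))
  refine ⟨Real.exp ((M₀:ℝ)^β), β, Real.exp_pos _, hβ0, ?_⟩
  intro m hm1 k₀ hk₀ xs hinj hspos
  set s : Set Ω := {ω | ∀ i, C.η (xs i) ω = 0} with hs_def
  have hsmeas : MeasurableSet s := by
    have hseq : s = ⋂ i, (C.η (xs i)) ⁻¹' ({0} : Set ℕ) := by
      ext ω; simp [hs_def, Set.mem_iInter]
    rw [hseq]
    exact MeasurableSet.iInter fun i => (C.meas_η _) (measurableSet_singleton 0)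
  by_cases hmM : M₀ ≤ m
  swap
  · -- small m : trivial bound
    have hmle : ((m:ℝ))^β ≤ ((M₀:ℝ))^β :=
      Real.rpow_le_rpow (Nat.cast_nonneg m)
        (by exact_mod_cast (le_of_lt (not_le.mp hmM))) hβ0.le
    have h1 : (1:ℝ) ≤ Real.exp ((M₀:ℝ)^β) * Real.exp (-(m:ℝ)^β) := by
      rw [← Real.exp_add, ← Real.exp_zero]
      exact Real.exp_le_exp.mpr (by linarith)
    have h2 : 1 - ENNReal.ofReal (Real.exp ((M₀:ℝ)^β) * Real.exp (-(m:ℝ)^β)) = 0 :=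
      tsub_eq_zero_of_le (by rwa [ENNReal.one_le_ofReal])
    rw [h2]
    exact zero_le
  obtain ⟨⟨hmain, hu1⟩, hud, hR8⟩ := hM₀ m hmM
  set u : ℝ := (m:ℝ)/h with hudef
  set n : ℝ := ndm d h m with hndef
  have hn0 : 0 ≤ n := H0 m
  have hu0 : (0:ℝ) < u := lt_of_lt_of_le one_pos hu1
  set rr : ℝ := n ^ ρexp with hrrdef
  have hrr0 : 0 ≤ rr := Real.rpow_nonneg hn0 _
  have hRrr : rr ≤ n ^ ((1:ℝ)/2 + epsd d) := H5 m hu1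
  have hKs : Real.sqrt d ≤ K := by
    rw [hKdef]; nlinarith [Nat.cast_nonneg (α := ℝ) d]
  have hK4 : 4*((d:ℝ)+1) ≤ K := by
    rw [hKdef]; linarith [hsd.le]
  have hgrw : u^γ/K^d = (rr/K)^d := by
    rw [div_pow, hrrdef, H1 m hu1]
  have hcardBall : ∀ cc : Fin d → ℤ, u^γ / K^d ≤ (Nat.card ↥(latticeBall cc rr) : ℝ) := by
    intro cc
    have h1 := ball_card_lb hd cc rr hrr0
    rw [hgrw]
    refine le_trans (pow_le_pow_left₀ (by positivity) ?_ d) h1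
    exact div_le_div_of_nonneg_left hrr0 hsd hKs
  have hcardAnn : ∀ i : ℕ, 2 ≤ i → i ≤ d/2 →
      u^γ/K^d ≤ (Nat.card ↥(Dball d n i \ Dball d n (i-1)) : ℝ) := by
    intro i hi2 hid2
    have hid : i ≤ d := le_trans hid2 (Nat.div_le_self d 2)
    have h1 := annulus_card_lb hd n i hi2 hid hR8
    refine le_trans ?_ h1
    rw [hgrw]
    apply pow_le_pow_left₀ (by positivity)
    calc rr/K ≤ rr/(4*((d:ℝ)+1)) := div_le_div_of_nonneg_left hrr0 (by positivity) hK4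
    _ ≤ n ^ ((1:ℝ)/2 + epsd d)/(4*((d:ℝ)+1)) :=
        (div_le_div_iff_of_pos_right (by positivity)).mpr hRrr
  -- the bad events and the covering
  set bad : Set (Fin d → ℤ) → Set Ω :=
    fun B => {ω | Rdens (fun x => C.η x ω) B < p₁/2} with hbaddef
  set F1 : Finset (Fin d → ℤ) := boxF d ⌈n ^ μexp⌉₊ with hF1
  set F2 : Finset ℕ := Finset.Icc 2 (d/2) with hF2
  have hMu0 : 0 ≤ n ^ μexp := Real.rpow_nonneg hn0 _
  have hcover : {ω | IsGood d p₁ h m (fun x => C.η x ω)}ᶜ ⊆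
      (⋃ cc ∈ F1, bad (latticeBall cc rr)) ∪
        (⋃ i ∈ F2, bad (Dball d n i \ Dball d n (i-1))) := by
    intro ω hω
    by_contra hcon
    simp only [Set.mem_union, not_or, Set.mem_iUnion, not_exists] at hcon
    apply hω
    show IsGood d p₁ h m (fun x => C.η x ω)
    apply Hgood m ω
    · intro cc hcc
      have hmem : cc ∈ F1 := by
        rw [hF1]; exact mem_boxF hcc (Nat.le_ceil _)
      have hnb := hcon.1 cc hmem
      rw [hbaddef] at hnb
      simp only [Set.mem_setOf_eq] at hnb
      rw [← hrrdef, ← hndef] at *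
      exact not_lt.mp hnb
    · intro i hi2 hid2
      have hmem : i ∈ F2 := by rw [hF2]; exact Finset.mem_Icc.mpr ⟨hi2, hid2⟩
      have hnb := hcon.2 i hmem
      rw [hbaddef] at hnb
      simp only [Set.mem_setOf_eq] at hnb
      rw [← hndef] at *
      exact not_lt.mp hnb
  -- Chernoff per region
  have hEbound : ∀ B : Set (Fin d → ℤ), B.Finite → B.Nonempty →
      (u^γ/K^d ≤ (Nat.card ↥B : ℝ)) →
      P (bad B) ≤ ENNReal.ofReal (Real.exp (-c₁ * (u^γ/K^d))) := by
    intro B hf hne hcard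
    refine le_trans (le_of_eq (by rw [hbaddef]))
      ((chernoff_region C hp₁ hp₁le B hf hne).trans (ENNReal.ofReal_le_ofReal ?_))
    apply Real.exp_le_exp.mpr
    have : c₁ * (u^γ/K^d) ≤ c₁ * (Nat.card ↥B : ℝ) := mul_le_mul_of_nonneg_left hcard hc₁.le
    rw [hc₁def] at this ⊢
    linarith
  have hannNE : ∀ i ∈ F2, (Dball d n i \ Dball d n (i-1)).Nonempty := by
    intro i hi
    rw [hF2, Finset.mem_Icc] at hi
    have hcard := hcardAnn i hi.1 hi.2
    have hpos : (0:ℝ) < u^γ/K^d := by positivity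
    have : (0:ℝ) < (Nat.card ↥(Dball d n i \ Dball d n (i-1)) : ℝ) := lt_of_lt_of_le hpos hcard
    have hlt : 0 < Nat.card ↥(Dball d n i \ Dball d n (i-1)) := by exact_mod_cast this
    rw [Nat.card_pos_iff] at hlt
    exact Set.nonempty_coe_sort.mp hlt.1
  set E : ℝ≥0∞ := ENNReal.ofReal (Real.exp (-c₁ * (u^γ/K^d))) with hEdef
  have hsum : P ({ω | IsGood d p₁ h m (fun x => C.η x ω)}ᶜ) ≤
      ((F1.card + F2.card : ℕ) : ℝ≥0∞) * E := by
    calc P ({ω | IsGood d p₁ h m (fun x => C.η x ω)}ᶜ)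
        ≤ P ((⋃ cc ∈ F1, bad (latticeBall cc rr)) ∪
            (⋃ i ∈ F2, bad (Dball d n i \ Dball d n (i-1)))) := measure_mono hcover
    _ ≤ P (⋃ cc ∈ F1, bad (latticeBall cc rr)) +
          P (⋃ i ∈ F2, bad (Dball d n i \ Dball d n (i-1))) := measure_union_le _ _
    _ ≤ (∑ cc ∈ F1, P (bad (latticeBall cc rr))) +
          ∑ i ∈ F2, P (bad (Dball d n i \ Dball d n (i-1))) :=
        add_le_add (measure_biUnion_finset_le _ _) (measure_biUnion_finset_le _ _)
    _ ≤ (∑ _cc ∈ F1, E) + ∑ _i ∈ F2, E := by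
        apply add_le_add
        · apply Finset.sum_le_sum
          intro cc _
          exact hEbound _ (latticeBall_finite _ _) ⟨cc, mem_latticeBall_self cc hrr0⟩
            (hcardBall cc)
        · apply Finset.sum_le_sum
          intro i hi
          rw [hF2, Finset.mem_Icc] at hi
          exact hEbound _ ((Dball_finite n i).subset Set.diff_subset)
            (hannNE i (by rw [hF2]; exact Finset.mem_Icc.mpr hi)) (hcardAnn i hi.1 hi.2)
    _ = ((F1.card + F2.card : ℕ) : ℝ≥0∞) * E := by
        rw [Finset.sum_const, Finset.sum_const, ← add_smul, nsmul_eq_mul]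
  -- counting the regions
  have hucard : ((F1.card + F2.card : ℕ) : ℝ) ≤ 2*(5*u)^d := by
    have hb : (⌈n^μexp⌉₊ : ℝ) < n^μexp + 1 := Nat.ceil_lt_add_one hMu0
    have hMle : n^μexp ≤ u := H3 m hu1
    have h51 : (1:ℝ) ≤ 5*u := by linarith
    have hF1card : ((F1.card : ℕ) : ℝ) ≤ (5*u)^d := by
      rw [hF1, boxF_card]
      push_cast
      apply pow_le_pow_left₀ (by positivity)
      linarith
    have hF2card : ((F2.card : ℕ) : ℝ) ≤ (5*u)^d := by
      rw [hF2, Nat.card_Icc]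
      have h2 : ((d/2+1-2 : ℕ):ℝ) ≤ (d:ℝ) := by
        have : (d/2 + 1 - 2 : ℕ) ≤ d := by omega
        exact_mod_cast this
      have h4 : (5*u) ≤ (5*u)^d := le_self_pow₀ h51 (by omega)
      have h3 : (d:ℝ) ≤ u := hud
      linarith
    push_cast
    push_cast at hF1card hF2card
    linarith
  -- main real estimate
  have hreal : ((F1.card + F2.card : ℕ):ℝ) * Real.exp (-c₁*(u^γ/K^d)) ≤
      Real.exp (-(m:ℝ)^β) * Real.exp (-(L * u^γ')) := by
    have hcNlow : -c₁ * (u^γ/K^d) = -(c * u^γ) := by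
      rw [hcdef]
      field_simp
    have hA0 : (0:ℝ) < 2*(5*u)^d := by positivity
    have hlogA : Real.log (2*(5*u)^d) = Real.log 2 + d * Real.log (5*u) := by
      rw [Real.log_mul two_ne_zero (by positivity), Real.log_pow]
    calc ((F1.card + F2.card : ℕ):ℝ) * Real.exp (-c₁*(u^γ/K^d))
        ≤ (2*(5*u)^d) * Real.exp (-c₁*(u^γ/K^d)) :=
          mul_le_mul_of_nonneg_right hucard (Real.exp_pos _).le
    _ = Real.exp (Real.log 2 + d * Real.log (5*u) - c * u^γ) := by
        rw [← Real.exp_log hA0, ← Real.exp_add, hcNlow, hlogA]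
        congr 1
    _ ≤ Real.exp (-(m:ℝ)^β - L*u^γ') := by
        apply Real.exp_le_exp.mpr
        linarith [hmain]
    _ = Real.exp (-(m:ℝ)^β) * Real.exp (-(L * u^γ')) := by
        rw [← Real.exp_add]
        ring_nf
  -- lower bound on P s
  have hq : P s = (P {ω | C.η 0 ω = 0})^k₀ := meas_empty_sites C xs hinj
  have hPs : ENNReal.ofReal (Real.exp (-(L * u^γ'))) ≤ P s := by
    have hexple : Real.exp (-(L * u^γ')) ≤ 1 := by
      rw [← Real.exp_zero]
      apply Real.exp_le_exp.mpr
      have : 0 ≤ u^γ' := Real.rpow_nonneg hu0.le _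
      nlinarith
    rcases Nat.eq_zero_or_pos k₀ with hk0 | hk0pos
    · rw [hq, hk0, pow_zero]
      exact ENNReal.ofReal_le_one.mpr hexple
    · have hq0 : P {ω | C.η 0 ω = 0} ≠ 0 := by
        intro h0
        rw [hq, h0, zero_pow (by omega)] at hspos
        exact lt_irrefl _ hspos
      have hp₀pos' : 0 < p₀ := by
        rw [hp₀def]
        exact ENNReal.toReal_pos hq0 (measure_ne_top _ _)
      have hqr : P {ω | C.η 0 ω = 0} = ENNReal.ofReal p₀ := by
        rw [hp₀def, ENNReal.ofReal_toReal (measure_ne_top _ _)]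
      rw [hq, hqr, ← ENNReal.ofReal_pow hp₀0]
      apply ENNReal.ofReal_le_ofReal
      have hlogp : p₀ ^ k₀ = Real.exp ((k₀:ℝ) * Real.log p₀) := by
        rw [Real.exp_nat_mul, Real.exp_log hp₀pos']
      rw [hlogp]
      apply Real.exp_le_exp.mpr
      have hkle : (k₀:ℝ) ≤ u^γ' := by
        rw [← H2 m hu1]
        exact hk₀
      have hll : (k₀:ℝ) * Real.log p₀ = -((k₀:ℝ) * L) := by
        rw [hLdef]; ring
      rw [hll]
      have := mul_le_mul_of_nonneg_left hkle hL
      nlinarith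
  -- assemble
  have hbadfinal : P ({ω | IsGood d p₁ h m (fun x => C.η x ω)}ᶜ) ≤
      ENNReal.ofReal (Real.exp ((M₀:ℝ)^β) * Real.exp (-(m:ℝ)^β)) * P s := by
    calc P ({ω | IsGood d p₁ h m (fun x => C.η x ω)}ᶜ)
        ≤ ((F1.card + F2.card : ℕ) : ℝ≥0∞) * E := hsum
    _ = ENNReal.ofReal (((F1.card + F2.card : ℕ):ℝ) * Real.exp (-c₁*(u^γ/K^d))) := by
        rw [hEdef, ENNReal.ofReal_mul (Nat.cast_nonneg _), ENNReal.ofReal_natCast]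
    _ ≤ ENNReal.ofReal (Real.exp (-(m:ℝ)^β) * Real.exp (-(L * u^γ'))) :=
        ENNReal.ofReal_le_ofReal hreal
    _ = ENNReal.ofReal (Real.exp (-(m:ℝ)^β)) * ENNReal.ofReal (Real.exp (-(L * u^γ'))) :=
        ENNReal.ofReal_mul (Real.exp_pos _).le
    _ ≤ ENNReal.ofReal (Real.exp ((M₀:ℝ)^β) * Real.exp (-(m:ℝ)^β)) * P s := by
        apply mul_le_mul'
        · apply ENNReal.ofReal_le_ofReal
          have h1 : (1:ℝ) ≤ Real.exp ((M₀:ℝ)^β) :=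
            Real.one_le_exp (Real.rpow_nonneg (Nat.cast_nonneg _) _)
          nlinarith [Real.exp_pos (-(m:ℝ)^β)]
        · exact hPs
  exact cond_lower_bound hsmeas hspos.ne' hbadfinal

end Core

lemma rpow_rpow_pow (x : ℝ) (hx : 0 ≤ x) (s t : ℝ) (k : ℕ) :
    ((x ^ s) ^ t) ^ k = x ^ (s * t * (k:ℝ)) := by
  rw [← Real.rpow_mul hx s t, ← Real.rpow_natCast (x ^ (s*t)) k,
    ← Real.rpow_mul hx]

/-- **`m`-goodness is overwhelmingly likely, even conditioned on few empty sites.** -/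
theorem good_config_likely
    {d : ℕ} (hd : 1 ≤ d) {Ω : Type} [MeasurableSpace Ω] {P : Measure Ω}
    [IsProbabilityMeasure P] (C : IIDConfig d Ω P)
    (p₁ : ℝ) (hp₁ : p₁ = (P {ω | 1 ≤ C.η 0 ω}).toReal) (hp₁pos : 0 < p₁) (hp₁le : p₁ ≤ 1)
    (h : ℝ) (hh : 0 < h) :
    ∃ α₃ β₃ : ℝ, 0 < α₃ ∧ 0 < β₃ ∧
      ∀ m : ℕ, 1 ≤ m →
        ∀ k₀ : ℕ, (k₀ : ℝ) ≤ (nhat d h m) ^ d →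
          ∀ xs : Fin k₀ → Fin d → ℤ, Function.Injective xs →
            0 < P {ω | ∀ i, C.η (xs i) ω = 0} →
            1 - ENNReal.ofReal (α₃ * Real.exp (-(m : ℝ) ^ β₃)) ≤
              P[{ω | IsGood d p₁ h m (fun x => C.η x ω)} | {ω | ∀ i, C.η (xs i) ω = 0}] := by
  have hu0 : ∀ m : ℕ, (0:ℝ) ≤ (m:ℝ)/h := fun m => div_nonneg (Nat.cast_nonneg m) hh.le
  by_cases hd3 : 3 ≤ d
  · -- dimension d ≥ 3
    set ε : ℝ := epsd d with hεdef
    have hd2 : (1:ℝ) ≤ (d:ℝ) - 2 := by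
      have : (3:ℝ) ≤ (d:ℝ) := by exact_mod_cast hd3
      linarith
    have hε0 : 0 < ε := by
      rw [hεdef]; unfold epsd; positivity
    have hε6 : ε ≤ 1/6 := by
      rw [hεdef]; unfold epsd
      rw [div_le_div_iff₀ (by linarith) (by norm_num)]
      linarith
    set a : ℝ := 1/(1+2*ε) with hadef
    have ha0 : 0 < a := by rw [hadef]; positivity
    have ha1 : a ≤ 1 := by
      rw [hadef]
      rw [div_le_one (by linarith)]
      linarith
    have hnd : ∀ m : ℕ, ndm d h m = ((m:ℝ)/h)^a := by
      intro m; unfold ndm; rw [if_pos hd3]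
    have hnh : ∀ m : ℕ, nhat d h m = (ndm d h m)^((1-ε)/3) := by
      intro m; unfold nhat; rw [if_pos hd3]
    apply core_estimate hd C p₁ hp₁ hp₁pos hp₁le h hh ((1-ε)/2) ((1:ℝ)/2 + ε)
      (a * ((1-ε)/2) * (d:ℝ)) (a * ((1-ε)/3) * (d:ℝ))
    · -- 0 < γ
      have : (0:ℝ) < (d:ℝ) := by positivity
      have h1ε : (0:ℝ) < (1-ε) := by linarith
      positivity
    · -- γ' < γ
      have hda : (0:ℝ) < (d:ℝ) := by positivity
      have h1ε : (0:ℝ) < (1-ε) := by linarith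
      have : (1-ε)/3 < (1-ε)/2 := by linarith
      have := mul_lt_mul_of_pos_left this ha0
      have := mul_lt_mul_of_pos_right this hda
      calc a * ((1-ε)/3) * (d:ℝ) = a * ((1-ε)/3) * (d:ℝ) := rfl
      _ < a * ((1-ε)/2) * (d:ℝ) := by nlinarith
    · -- H1
      intro m hu1
      rw [hnd m, rpow_rpow_pow _ (hu0 m)]
    · -- H2
      intro m hu1
      rw [hnh m, hnd m, rpow_rpow_pow _ (hu0 m)]
    · -- H3
      intro m hu1
      rw [hnd m, ← Real.rpow_mul (hu0 m)]
      calc ((m:ℝ)/h) ^ (a * ((1:ℝ)/2 + ε)) ≤ ((m:ℝ)/h) ^ (1:ℝ) := by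
            apply Real.rpow_le_rpow_of_exponent_le hu1
            rw [hadef]
            rw [div_mul_eq_mul_div, div_le_one (by linarith)]
            linarith
      _ = (m:ℝ)/h := Real.rpow_one _
    · -- H5
      intro m hu1
      have hn1 : 1 ≤ ndm d h m := by
        rw [hnd m]
        calc (1:ℝ) = ((m:ℝ)/h)^(0:ℝ) := (Real.rpow_zero _).symm
        _ ≤ ((m:ℝ)/h)^a := Real.rpow_le_rpow_of_exponent_le hu1 ha0.le
      apply Real.rpow_le_rpow_of_exponent_le hn1
      linarith
    · -- H6
      have hpos : 0 < a * ((1:ℝ)/2 + ε) := by positivity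
      have hcomp : ∀ m : ℕ, (((m:ℝ)/h)^(a * ((1:ℝ)/2+ε))) = ndm d h m ^ ((1:ℝ)/2 + epsd d) := by
        intro m
        rw [hnd m, ← Real.rpow_mul (hu0 m), ← hεdef]
      have base : Filter.Tendsto (fun m : ℕ => ((m:ℝ)/h)^(a * ((1:ℝ)/2+ε)))
          Filter.atTop Filter.atTop :=
        (tendsto_rpow_atTop hpos).comp
          ((tendsto_natCast_atTop_atTop (R := ℝ)).atTop_div_const hh)
      exact base.congr hcomp
    · -- H0
      intro m
      unfold ndm
      split_ifs <;> exact Real.rpow_nonneg (hu0 m) _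
    · -- Hgood
      intro m ω hball hann
      unfold IsGood
      split_ifs with h4 h3
      · constructor
        · intro cc hsubc
          apply hball cc
          have hc1 : cc ∈ latticeBall cc (ndm d h m ^ ((1 - epsd d)/2)) :=
            mem_latticeBall_self _ (Real.rpow_nonneg (by
              unfold ndm; split_ifs <;> exact Real.rpow_nonneg (hu0 m) _) _)
          have := hsubc hc1
          simp only [Dball, Set.mem_setOf_eq, Nat.cast_one, one_mul] at this
          exact this
        · exact hann
      · intro cc hsubc
        apply hball cc
        have hc1 : cc ∈ latticeBall cc (ndm d h m ^ ((1 - epsd d)/2)) :=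
          mem_latticeBall_self _ (Real.rpow_nonneg (by
            unfold ndm; split_ifs <;> exact Real.rpow_nonneg (hu0 m) _) _)
        have := hsubc hc1
        simp only [Dball, Set.mem_setOf_eq, Nat.cast_one, one_mul] at this
        exact this
      · omega
  · -- dimension d ≤ 2
    have hd2 : d = 1 ∨ d = 2 := by omega
    have hnd : ∀ m : ℕ, ndm d h m = ((m:ℝ)/h)^((1:ℝ)/2) := by
      intro m; unfold ndm; rw [if_neg hd3]
    have hnh : ∀ m : ℕ, nhat d h m = (ndm d h m)^((1:ℝ)/8) := by
      intro m; unfold nhat; rw [if_neg hd3]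
    have heps : (1:ℝ)/4 ≤ (1:ℝ)/2 + epsd d ∧ 0 < (1:ℝ)/2 + epsd d := by
      rcases hd2 with rfl | rfl
      · constructor <;> (unfold epsd; norm_num)
      · constructor <;> (unfold epsd; norm_num)
    apply core_estimate hd C p₁ hp₁ hp₁pos hp₁le h hh ((1:ℝ)/4) (1:ℝ)
      ((1:ℝ)/2 * ((1:ℝ)/4) * (d:ℝ)) ((1:ℝ)/2 * ((1:ℝ)/8) * (d:ℝ))
    · have : (0:ℝ) < (d:ℝ) := by positivity
      positivity
    · have : (0:ℝ) < (d:ℝ) := by positivity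
      nlinarith
    · intro m hu1
      rw [hnd m, rpow_rpow_pow _ (hu0 m)]
    · intro m hu1
      rw [hnh m, hnd m, rpow_rpow_pow _ (hu0 m)]
    · intro m hu1
      rw [hnd m, Real.rpow_one]
      calc ((m:ℝ)/h) ^ ((1:ℝ)/2) ≤ ((m:ℝ)/h) ^ (1:ℝ) :=
            Real.rpow_le_rpow_of_exponent_le hu1 (by norm_num)
      _ = (m:ℝ)/h := Real.rpow_one _
    · intro m hu1
      have hn1 : 1 ≤ ndm d h m := by
        rw [hnd m]
        calc (1:ℝ) = ((m:ℝ)/h)^(0:ℝ) := (Real.rpow_zero _).symm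
        _ ≤ ((m:ℝ)/h)^((1:ℝ)/2) := Real.rpow_le_rpow_of_exponent_le hu1 (by norm_num)
      exact Real.rpow_le_rpow_of_exponent_le hn1 heps.1
    · have hpos : 0 < (1:ℝ)/2 * ((1:ℝ)/2 + epsd d) := by
        have := heps.2; nlinarith
      have hcomp : ∀ m : ℕ,
          (((m:ℝ)/h)^((1:ℝ)/2 * ((1:ℝ)/2+epsd d))) = ndm d h m ^ ((1:ℝ)/2 + epsd d) := by
        intro m
        rw [hnd m, ← Real.rpow_mul (hu0 m)]
      have base : Filter.Tendsto (fun m : ℕ => ((m:ℝ)/h)^((1:ℝ)/2 * ((1:ℝ)/2+epsd d)))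
          Filter.atTop Filter.atTop :=
        (tendsto_rpow_atTop hpos).comp
          ((tendsto_natCast_atTop_atTop (R := ℝ)).atTop_div_const hh)
      exact base.congr hcomp
    · intro m
      unfold ndm
      split_ifs <;> exact Real.rpow_nonneg (hu0 m) _
    · intro m ω hball hann
      unfold IsGood
      split_ifs with h4 h3
      · omega
      · omega
      · intro cc hcc
        apply hball cc
        rwa [Real.rpow_one]
end

section
/- (Stationarity of renewal-framed passage times.) Assume p_1 > 0 and fix x ∈ ℤ^d with x ≠ 0. On the event {η(0) ≥ 1}, define v_0 = 0 and v_{k+1} = min{n > v_k : η(n·x) ≥ 1} for k ≥ 0, and set Y(m,n) = T(v_m·x, v_n·x) for 0 ≤ m ≤ n. Then, under the conditional law given {η(0) ≥ 1}, for all nonnegative integers m_1 ≤ m_2 ≤ ⋯ ≤ m_j and every nonnegative integer p, the random vectors (Y(m_1, m_2), Y(m_2, m_3), …, Y(m_{j−1}, m_j)) and (Y(m_1 + p, m_2 + p), …, Y(m_{j−1} + p, m_j + p)) have the same joint distribution. -/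
open MeasureTheory ProbabilityTheory Filter Set
open scoped ENNReal NNReal Pointwise

noncomputable section

/-- The `2d` unit vectors `±e₁, …, ±e_d` of `ℤ^d`. -/
def unitVecs (d : ℕ) : Finset (Fin d → ℤ) :=
  Finset.image (fun p : Fin d × Bool => fun i => if i = p.1 then (if p.2 then 1 else -1) else 0)
    Finset.univ

/-- The uniform distribution on the `2d` unit vectors of `ℤ^d`. -/
noncomputable def stepDist (d : ℕ) : Measure (Fin d → ℤ) :=
  ((2 * d : ℕ) : ℝ≥0∞)⁻¹ • ∑ v ∈ unitVecs d, Measure.dirac v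

/-- Index type for the basic random variables of the frog model:
sites (for the initial configuration) and triples `(x, k, n)` (for the `n`-th increment of
the `k`-th walk started at `x`). -/
def frogIdx (d : ℕ) : Type := (Fin d → ℤ) ⊕ ((Fin d → ℤ) × ℕ × ℕ)

abbrev frogCodom (d : ℕ) : frogIdx d → Type := fun i =>
  match i with
  | Sum.inl _ => ℕ
  | Sum.inr _ => Fin d → ℤ

instance frogCodomMS (d : ℕ) : ∀ i : frogIdx d, MeasurableSpace (frogCodom d i) := fun i =>
  match i with
  | Sum.inl _ => inferInstance
  | Sum.inr _ => inferInstance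

/-- The frog model on `ℤ^d`: an i.i.d. initial configuration `η` and, for every site `x` and
every `k ≥ 1`, a simple random walk `S x k` started at `x`, all mutually independent. -/
structure FrogModel (d : ℕ) (Ω : Type) [MeasurableSpace Ω] (P : Measure Ω) where
  η : (Fin d → ℤ) → Ω → ℕ
  S : (Fin d → ℤ) → ℕ → ℕ → Ω → (Fin d → ℤ)
  meas_η : ∀ x, Measurable (η x)
  meas_S : ∀ x k n, Measurable (S x k n)
  S_zero : ∀ x k ω, S x k 0 ω = x
  step_law : ∀ x k n,
    Measure.map (fun ω => S x k (n + 1) ω - S x k n ω) P = stepDist d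
  η_ident : ∀ x, Measure.map (η x) P = Measure.map (η 0) P
  indep : iIndepFun (m := frogCodomMS d)
    (fun i => match i with
      | Sum.inl x => η x
      | Sum.inr q => fun ω => S q.1 q.2.1 (q.2.2 + 1) ω - S q.1 q.2.1 q.2.2 ω) P

variable {d : ℕ} {Ω : Type} [MeasurableSpace Ω] {P : Measure Ω}

/-- `t(x,z)`: the first time one of the `η(x)` walks started at `x` hits `z`
(`∞` if `η(x) = 0` or `z` is never hit). Values in `ℕ ∪ {∞} ⊆ ℝ≥0∞`. -/
noncomputable def hitT (M : FrogModel d Ω P) (x z : Fin d → ℤ) (ω : Ω) : ℝ≥0∞ :=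
  sInf {s : ℝ≥0∞ | ∃ n : ℕ, s = n ∧ ∃ k : ℕ, 1 ≤ k ∧ k ≤ M.η x ω ∧ M.S x k n ω = z}

/-- `T(x,z)`: the frog-model passage time, infimum of `Σ t(x_{i-1}, x_i)` over finite paths
from `x` to `z`. -/
noncomputable def passT (M : FrogModel d Ω P) (x z : Fin d → ℤ) (ω : Ω) : ℝ≥0∞ :=
  sInf {s : ℝ≥0∞ | ∃ m : ℕ, 1 ≤ m ∧ ∃ γ : ℕ → Fin d → ℤ, γ 0 = x ∧ γ m = z ∧
    s = ∑ i ∈ Finset.range m, hitT M (γ i) (γ (i + 1)) ω}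

/-- `ξ̄_n ⊆ ℝ^d`: the union of the unit cubes `y + (-1/2, 1/2]^d` over the sites `y`
visited by time `n`, i.e. with `T(0,y) ≤ n`. -/
def xiBar (M : FrogModel d Ω P) (n : ℕ) (ω : Ω) : Set (Fin d → ℝ) :=
  {u | ∃ y : Fin d → ℤ, passT M 0 y ω ≤ (n : ℝ≥0∞) ∧
         ∀ i, u i - (y i : ℝ) ∈ Set.Ioc (-(1/2) : ℝ) (1/2)}

/-- Passage time to a point `u ∈ ℝ^d`: the first `n` with `u ∈ ξ̄_n`. -/
noncomputable def passTR (M : FrogModel d Ω P) (u : Fin d → ℝ) (ω : Ω) : ℝ≥0∞ :=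
  sInf {s : ℝ≥0∞ | ∃ n : ℕ, s = n ∧ u ∈ xiBar M n ω}

end

/-- The renewal sequence along the ray `{n·x : n ≥ 0}`: `v 0 = 0` and
`v (k+1) = min{n > v k : η(n·x) ≥ 1}`. -/
noncomputable def vseq {d : ℕ} {Ω : Type} [MeasurableSpace Ω] {P : MeasureTheory.Measure Ω}
    (M : FrogModel d Ω P) (x : Fin d → ℤ) : ℕ → Ω → ℕ
  | 0 => fun _ => 0
  | k + 1 => fun ω => sInf {n : ℕ | vseq M x k ω < n ∧ 1 ≤ M.η (n • x) ω}

namespace FrogAux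

open MeasureTheory ProbabilityTheory Set
open scoped Classical

section NatHelpers

/-- Measurability of a pointwise `sInf` of sets of naturals. -/
lemma measurable_nat_sInf {α : Type*} [MeasurableSpace α] {S : α → Set ℕ}
    (h : ∀ n, MeasurableSet {a | n ∈ S a}) : Measurable (fun a => sInf (S a)) := by
  apply measurable_to_countable'
  intro m
  have key : (fun a => sInf (S a)) ⁻¹' {m} =
      ({a | m ∈ S a} ∩ ⋂ l ∈ Finset.range m, {a | l ∈ S a}ᶜ) ∪
        (if m = 0 then ⋂ l, {a | l ∈ S a}ᶜ else ∅) := by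
    ext a
    simp only [mem_preimage, mem_singleton_iff, mem_union, mem_inter_iff, mem_iInter,
      Finset.mem_range, mem_compl_iff, mem_setOf_eq]
    constructor
    · rintro rfl
      by_cases hne : (S a).Nonempty
      · exact Or.inl ⟨Nat.sInf_mem hne, fun l hl => Nat.notMem_of_lt_sInf hl⟩
      · rw [Set.not_nonempty_iff_eq_empty] at hne
        right
        have h0 : sInf (S a) = 0 := by rw [hne]; exact Nat.sInf_empty
        rw [h0, if_pos rfl]
        simp [hne]
    · rintro (⟨hm, hl⟩ | h0)
      · refine le_antisymm (Nat.sInf_le hm) ?_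
        by_contra hc
        push_neg at hc
        exact hl _ hc (Nat.sInf_mem ⟨m, hm⟩)
      · by_cases hm : m = 0
        · rw [if_pos hm] at h0
          simp only [mem_iInter, mem_compl_iff, mem_setOf_eq] at h0
          have : S a = ∅ := Set.eq_empty_iff_forall_notMem.2 h0
          rw [this, Nat.sInf_empty, hm]
        · rw [if_neg hm] at h0
          exact absurd h0 (Set.notMem_empty a)
  rw [key]
  refine MeasurableSet.union (MeasurableSet.inter (h m)
    (Finset.measurableSet_biInter _ fun l _ => (h l).compl)) ?_
  split_ifs
  · exact MeasurableSet.iInter fun l => (h l).compl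
  · exact MeasurableSet.empty

/-- Translation of a pointwise `sInf` of sets of naturals. -/
lemma nat_sInf_translate {S T : Set ℕ} {t : ℕ} (hS : S.Nonempty)
    (hST : ∀ m, m ∈ T ↔ ∃ n ∈ S, m = n + t) : sInf T = sInf S + t := by
  have hT : T.Nonempty := by
    obtain ⟨n, hn⟩ := hS
    exact ⟨n + t, (hST _).2 ⟨n, hn, rfl⟩⟩
  refine le_antisymm (Nat.sInf_le ((hST _).2 ⟨sInf S, Nat.sInf_mem hS, rfl⟩)) ?_
  obtain ⟨n, hn, hEq⟩ := (hST _).1 (Nat.sInf_mem hT)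
  rw [hEq]
  exact Nat.add_le_add_right (Nat.sInf_le hn) t

/-- Composing a countably-parametrized family of measurable maps with a measurable
parameter. -/
lemma measurable_nat_param₁ {α β : Type*} [MeasurableSpace α] [MeasurableSpace β]
    {f : ℕ → α → β} (hf : ∀ m, Measurable (f m)) {u : α → ℕ} (hu : Measurable u) :
    Measurable (fun a => f (u a) a) := by
  intro s hs
  have : (fun a => f (u a) a) ⁻¹' s = ⋃ m, (u ⁻¹' {m} ∩ f m ⁻¹' s) := by
    ext a
    simp only [mem_preimage, mem_iUnion, mem_inter_iff, mem_singleton_iff]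
    exact ⟨fun h => ⟨u a, rfl, h⟩, by rintro ⟨m, rfl, h⟩; exact h⟩
  rw [this]
  exact MeasurableSet.iUnion fun m => ((hu (measurableSet_singleton m)).inter (hf m hs))

lemma measurable_nat_param₂ {α β : Type*} [MeasurableSpace α] [MeasurableSpace β]
    {f : ℕ → ℕ → α → β} (hf : ∀ m n, Measurable (f m n)) {u w : α → ℕ}
    (hu : Measurable u) (hw : Measurable w) :
    Measurable (fun a => f (u a) (w a) a) := by
  intro s hs
  have : (fun a => f (u a) (w a) a) ⁻¹' s =
      ⋃ m, ⋃ n, (u ⁻¹' {m} ∩ w ⁻¹' {n} ∩ f m n ⁻¹' s) := by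
    ext a
    simp only [mem_preimage, mem_iUnion, mem_inter_iff, mem_singleton_iff]
    exact ⟨fun h => ⟨u a, w a, ⟨rfl, rfl⟩, h⟩, by rintro ⟨m, n, ⟨rfl, rfl⟩, h⟩; exact h⟩
  rw [this]
  exact MeasurableSet.iUnion fun m => MeasurableSet.iUnion fun n =>
    (((hu (measurableSet_singleton m)).inter (hw (measurableSet_singleton n))).inter
      (hf m n hs))

/-- Rewriting an `sInf` over `{↑n | p n}` as a countable infimum in `ℝ≥0∞`. -/
lemma sInf_nat_eq_iInf (p : ℕ → Prop) :
    sInf {s : ℝ≥0∞ | ∃ n : ℕ, s = n ∧ p n} =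
      ⨅ n : ℕ, if p n then (n : ℝ≥0∞) else ∞ := by
  refine le_antisymm (le_iInf fun n => ?_) (le_sInf ?_)
  · split_ifs with h
    · exact sInf_le ⟨n, rfl, h⟩
    · exact le_top
  · rintro s ⟨n, rfl, h⟩
    exact iInf_le_of_le n (by simp [h])

end NatHelpers

section Canonical

variable {d : ℕ}

/-- The canonical sample space of the frog model. -/
abbrev CSp (d : ℕ) : Type := ∀ i : frogIdx d, frogCodom d i

/-- Walk positions in the canonical space. -/
def SCw (x : Fin d → ℤ) (k n : ℕ) (c : CSp d) : Fin d → ℤ :=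
  x + ∑ i ∈ Finset.range n, c (Sum.inr (x, k, i))

/-- `t(x,z)` in the canonical space. -/
noncomputable def hitC (x z : Fin d → ℤ) (c : CSp d) : ℝ≥0∞ :=
  sInf {s : ℝ≥0∞ | ∃ n : ℕ, s = n ∧ ∃ k : ℕ, 1 ≤ k ∧ k ≤ c (Sum.inl x) ∧ SCw x k n c = z}

/-- `T(x,z)` in the canonical space. -/
noncomputable def passC (x z : Fin d → ℤ) (c : CSp d) : ℝ≥0∞ :=
  sInf {s : ℝ≥0∞ | ∃ m : ℕ, 1 ≤ m ∧ ∃ γ : ℕ → Fin d → ℤ, γ 0 = x ∧ γ m = z ∧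
    s = ∑ i ∈ Finset.range m, hitC (γ i) (γ (i + 1)) c}

/-- Renewal sequence in the canonical space. -/
noncomputable def vC (x : Fin d → ℤ) : ℕ → CSp d → ℕ
  | 0 => fun _ => 0
  | k + 1 => fun c => sInf {n : ℕ | vC x k c < n ∧ 1 ≤ c (Sum.inl (n • x))}

/-- Spatial shift on the canonical space. -/
def shiftC (z : Fin d → ℤ) (c : CSp d) : CSp d := fun i =>
  match i with
  | Sum.inl y => c (Sum.inl (y + z))
  | Sum.inr q => c (Sum.inr (q.1 + z, q.2))

/-- Spatial shift on the index set. -/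
def shIdx (z : Fin d → ℤ) : frogIdx d → frogIdx d := fun i =>
  match i with
  | Sum.inl y => Sum.inl (y + z)
  | Sum.inr q => Sum.inr (q.1 + z, q.2)

variable {Ω : Type} [MeasurableSpace Ω] {P : Measure Ω}

/-- The canonical map from the abstract sample space. -/
def emap (M : FrogModel d Ω P) (ω : Ω) : CSp d := fun i =>
  match i with
  | Sum.inl y => M.η y ω
  | Sum.inr q => M.S q.1 q.2.1 (q.2.2 + 1) ω - M.S q.1 q.2.1 q.2.2 ω

lemma emap_measurable (M : FrogModel d Ω P) : Measurable (emap M) := by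
  apply measurable_pi_lambda
  intro i
  match i with
  | Sum.inl y => exact M.meas_η y
  | Sum.inr q => exact (M.meas_S _ _ _).sub (M.meas_S _ _ _)

lemma S_eq_SCw (M : FrogModel d Ω P) (x : Fin d → ℤ) (k n : ℕ) (ω : Ω) :
    M.S x k n ω = SCw x k n (emap M ω) := by
  induction n with
  | zero => simp [SCw, M.S_zero]
  | succ n ih =>
      have key : SCw x k (n + 1) (emap M ω) =
          SCw x k n (emap M ω) + (M.S x k (n + 1) ω - M.S x k n ω) := by
        simp only [SCw, Finset.sum_range_succ, emap]
        abel
      rw [key, ← ih]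
      abel

lemma hitT_eq_hitC (M : FrogModel d Ω P) (x z : Fin d → ℤ) (ω : Ω) :
    hitT M x z ω = hitC x z (emap M ω) := by
  unfold hitT hitC
  congr 1
  ext s
  refine exists_congr fun n => and_congr_right fun _ => exists_congr fun k => ?_
  rw [S_eq_SCw M x k n ω]
  rfl

lemma passT_eq_passC (M : FrogModel d Ω P) (x z : Fin d → ℤ) (ω : Ω) :
    passT M x z ω = passC x z (emap M ω) := by
  unfold passT passC
  congr 1
  ext s
  refine exists_congr fun m => and_congr_right fun _ => exists_congr fun γ =>
    and_congr_right fun _ => and_congr_right fun _ => ?_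
  constructor <;> intro h <;> rw [h] <;> exact Finset.sum_congr rfl fun i _ =>
    (by rw [hitT_eq_hitC])

lemma vseq_eq_vC (M : FrogModel d Ω P) (x : Fin d → ℤ) (k : ℕ) (ω : Ω) :
    vseq M x k ω = vC x k (emap M ω) := by
  induction k with
  | zero => rfl
  | succ k ih =>
      show sInf _ = sInf _
      rw [ih]
      rfl

lemma measurable_SCw (x : Fin d → ℤ) (k n : ℕ) : Measurable (SCw x k n : CSp d → _) := by
  apply measurable_pi_iff.2
  intro j
  have : (fun c : CSp d => SCw x k n c j) =
      fun c => x j + ∑ i ∈ Finset.range n, c (Sum.inr (x, k, i)) j := by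
    funext c; simp [SCw, Finset.sum_apply]
  rw [this]
  exact measurable_const.add (Finset.measurable_sum _ fun i _ =>
    (measurable_pi_apply j).comp (measurable_pi_apply (X := frogCodom d) (Sum.inr (x, k, i))))

lemma measurable_hitC (x z : Fin d → ℤ) : Measurable (hitC x z) := by
  have h1 : hitC x z = fun c => ⨅ n : ℕ,
      if (∃ k : ℕ, 1 ≤ k ∧ k ≤ c (Sum.inl x) ∧ SCw x k n c = z) then (n : ℝ≥0∞) else ∞ :=
    funext fun c => sInf_nat_eq_iInf _
  rw [h1]
  refine Measurable.iInf fun n => ?_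
  refine Measurable.ite ?_ measurable_const measurable_const
  have : {c : CSp d | ∃ k : ℕ, 1 ≤ k ∧ k ≤ c (Sum.inl x) ∧ SCw x k n c = z} =
      ⋃ k, {c : CSp d | 1 ≤ k ∧ k ≤ c (Sum.inl x) ∧ SCw x k n c = z} := by
    ext c; simp [mem_iUnion]
  rw [this]
  refine MeasurableSet.iUnion fun k => ?_
  by_cases hk : 1 ≤ k
  · simp only [hk, true_and]
    exact MeasurableSet.inter ((measurable_pi_apply (X := frogCodom d) (Sum.inl x)) (.of_discrete (s := Ici k)))
      ((measurable_SCw x k n) (measurableSet_singleton z))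
  · simp [hk]

/-- Extension of a finite path to `ℕ`. -/
def pathExt (j : Σ m : ℕ, Fin (m + 1) → Fin d → ℤ) (i : ℕ) : Fin d → ℤ :=
  j.2 ⟨min i j.1, Nat.lt_succ_of_le (min_le_right _ _)⟩

lemma passC_eq_iInf (a b : Fin d → ℤ) (c : CSp d) :
    passC a b c = ⨅ j : Σ m : ℕ, Fin (m + 1) → Fin d → ℤ,
      if 1 ≤ j.1 ∧ pathExt j 0 = a ∧ pathExt j j.1 = b then
        ∑ i ∈ Finset.range j.1, hitC (pathExt j i) (pathExt j (i + 1)) c else ∞ := by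
  refine le_antisymm (le_iInf fun j => ?_) (le_sInf ?_)
  · split_ifs with h
    · exact sInf_le ⟨j.1, h.1, pathExt j, h.2.1, h.2.2, rfl⟩
    · exact le_top
  · rintro s ⟨m, hm, γ, h0, hmb, rfl⟩
    refine iInf_le_of_le ⟨m, fun i => γ i⟩ ?_
    have e0 : pathExt ⟨m, fun i => γ i⟩ 0 = a := by
      show γ (min 0 m) = a
      rwa [Nat.min_eq_left (Nat.zero_le m)]
    have em : pathExt ⟨m, fun i => γ i⟩ m = b := by
      show γ (min m m) = b
      rwa [min_self]
    rw [if_pos ⟨hm, e0, em⟩]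
    refine le_of_eq (Finset.sum_congr rfl fun i hi => ?_)
    rw [Finset.mem_range] at hi
    have h1 : pathExt ⟨m, fun i => γ i⟩ i = γ i := by
      show γ (min i m) = γ i
      rw [Nat.min_eq_left hi.le]
    have h2 : pathExt ⟨m, fun i => γ i⟩ (i + 1) = γ (i + 1) := by
      show γ (min (i + 1) m) = γ (i + 1)
      rw [Nat.min_eq_left hi]
    rw [h1, h2]

lemma measurable_passC (a b : Fin d → ℤ) : Measurable (passC a b) := by
  have h1 : passC a b = fun c => ⨅ j : Σ m : ℕ, Fin (m + 1) → Fin d → ℤ,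
      if 1 ≤ j.1 ∧ pathExt j 0 = a ∧ pathExt j j.1 = b then
        ∑ i ∈ Finset.range j.1, hitC (pathExt j i) (pathExt j (i + 1)) c else ∞ :=
    funext fun c => passC_eq_iInf a b c
  rw [h1]
  refine Measurable.iInf fun j => ?_
  by_cases h : 1 ≤ j.1 ∧ pathExt j 0 = a ∧ pathExt j j.1 = b
  · simp only [if_pos h]
    exact Finset.measurable_sum _ fun i _ => measurable_hitC _ _
  · simp only [if_neg h]
    exact measurable_const

lemma measurable_vC (x : Fin d → ℤ) (k : ℕ) : Measurable (vC x k) := by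
  induction k with
  | zero => exact measurable_const
  | succ k ih =>
      show Measurable fun c : CSp d =>
        sInf {n : ℕ | vC x k c < n ∧ 1 ≤ c (Sum.inl (n • x))}
      apply measurable_nat_sInf
      intro n
      exact MeasurableSet.inter (ih (.of_discrete (s := Iio n)))
        ((measurable_pi_apply (X := frogCodom d) (Sum.inl (n • x))) (.of_discrete (s := Ici 1)))

lemma measurable_shiftC (z : Fin d → ℤ) : Measurable (shiftC z : CSp d → CSp d) := by
  apply measurable_pi_lambda
  intro i
  match i with
  | Sum.inl y => exact measurable_pi_apply (X := frogCodom d) (Sum.inl (y + z))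
  | Sum.inr q => exact measurable_pi_apply (X := frogCodom d) (Sum.inr (q.1 + z, q.2))

lemma shiftC_shiftC (z w : Fin d → ℤ) (c : CSp d) :
    shiftC z (shiftC w c) = shiftC (z + w) c := by
  funext i
  match i with
  | Sum.inl y =>
      show c (Sum.inl (y + z + w)) = c (Sum.inl (y + (z + w)))
      rw [add_assoc]
  | Sum.inr q =>
      show c (Sum.inr (q.1 + z + w, q.2)) = c (Sum.inr (q.1 + (z + w), q.2))
      rw [add_assoc]

lemma shiftC_iterate (x : Fin d → ℤ) (n : ℕ) (c : CSp d) :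
    (shiftC x)^[n] c = shiftC (n • x) c := by
  induction n with
  | zero =>
      funext i
      match i with
      | Sum.inl y =>
          show c (Sum.inl y) = c (Sum.inl (y + 0 • x))
          rw [zero_nsmul, add_zero]
      | Sum.inr q =>
          show c (Sum.inr q) = c (Sum.inr (q.1 + 0 • x, q.2))
          rw [zero_nsmul, add_zero]
  | succ n ih =>
      rw [Function.iterate_succ_apply', ih, shiftC_shiftC, succ_nsmul, add_comm]

/-- The set of configurations with infinitely many renewal sites along the ray. -/
def Grec (x : Fin d → ℤ) : Set (CSp d) :=
  {c | ∀ m : ℕ, ∃ n : ℕ, m < n ∧ 1 ≤ c (Sum.inl (n • x))}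

lemma shiftC_mem_Grec {x : Fin d → ℤ} {c : CSp d} (hc : c ∈ Grec x) (t : ℕ) :
    shiftC (t • x) c ∈ Grec x := by
  intro m
  obtain ⟨n, hn, h1⟩ := hc (m + t)
  refine ⟨n - t, by omega, ?_⟩
  show 1 ≤ c (Sum.inl ((n - t) • x + t • x))
  rw [← add_nsmul]
  have h2 : n - t + t = n := by omega
  rw [h2]
  exact h1

lemma vC_one_mem {x : Fin d → ℤ} {c : CSp d} (hc : c ∈ Grec x) :
    0 < vC x 1 c ∧ 1 ≤ c (Sum.inl (vC x 1 c • x)) := by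
  have hne : {n : ℕ | vC x 0 c < n ∧ 1 ≤ c (Sum.inl (n • x))}.Nonempty := by
    obtain ⟨n, hn, h1⟩ := hc 0
    exact ⟨n, hn, h1⟩
  exact Nat.sInf_mem hne

lemma vC_shift {x : Fin d → ℤ} {c : CSp d} (hc : c ∈ Grec x) (k : ℕ) :
    vC x (k + 1) c = vC x k (shiftC (vC x 1 c • x) c) + vC x 1 c := by
  set t := vC x 1 c with ht
  have hGθ := shiftC_mem_Grec hc t
  have hθ : ∀ n : ℕ, shiftC (t • x) c (Sum.inl (n • x)) = c (Sum.inl ((n + t) • x)) := by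
    intro n
    show c (Sum.inl (n • x + t • x)) = _
    rw [← add_nsmul]
  induction k with
  | zero =>
      show vC x 1 c = 0 + t
      omega
  | succ k ih =>
      show sInf {n : ℕ | vC x (k + 1) c < n ∧ 1 ≤ c (Sum.inl (n • x))} =
        sInf {n : ℕ | vC x k (shiftC (t • x) c) < n ∧
          1 ≤ shiftC (t • x) c (Sum.inl (n • x))} + t
      refine nat_sInf_translate ?_ ?_
      · obtain ⟨n, hn, h1⟩ := hGθ (vC x k (shiftC (t • x) c))
        exact ⟨n, hn, h1⟩
      · intro m
        constructor
        · rintro ⟨hlt, hcond⟩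
          rw [ih] at hlt
          refine ⟨m - t, ⟨by omega, ?_⟩, by omega⟩
          rw [hθ]
          have h2 : m - t + t = m := by omega
          rw [h2]
          exact hcond
        · rintro ⟨n, ⟨hlt, hcond⟩, rfl⟩
          rw [hθ] at hcond
          refine ⟨?_, hcond⟩
          rw [ih]
          omega

lemma SCw_shift (a z : Fin d → ℤ) (k n : ℕ) (c : CSp d) :
    SCw (a + z) k n c = SCw a k n (shiftC z c) + z := by
  show (a + z) + _ = (a + _) + z
  have : ∀ i : ℕ, shiftC z c (Sum.inr (a, k, i)) = c (Sum.inr (a + z, k, i)) :=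
    fun i => rfl
  simp only [this]
  abel

lemma hitC_shift (a b z : Fin d → ℤ) (c : CSp d) :
    hitC a b (shiftC z c) = hitC (a + z) (b + z) c := by
  unfold hitC
  congr 1
  ext s
  refine exists_congr fun n => and_congr_right fun _ => exists_congr fun k =>
    and_congr_right fun _ => ?_
  have h1 : shiftC z c (Sum.inl a) = c (Sum.inl (a + z)) := rfl
  rw [h1]
  refine and_congr_right fun _ => ?_
  constructor
  · intro h
    rw [SCw_shift, h]
  · intro h
    have := SCw_shift a z k n c
    rw [h] at this
    exact add_right_cancel this.symm

lemma passC_shift (a b z : Fin d → ℤ) (c : CSp d) :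
    passC a b (shiftC z c) = passC (a + z) (b + z) c := by
  unfold passC
  congr 1
  ext s
  constructor
  · rintro ⟨m, hm, γ, h0, hmb, rfl⟩
    refine ⟨m, hm, fun i => γ i + z, by show γ 0 + z = a + z; rw [h0],
      by show γ m + z = b + z; rw [hmb], ?_⟩
    exact Finset.sum_congr rfl fun i _ => (hitC_shift _ _ _ _)
  · rintro ⟨m, hm, γ, h0, hmb, rfl⟩
    have ez : ∀ w : Fin d → ℤ, w - z + z = w := fun w => by abel
    refine ⟨m, hm, fun i => γ i - z, by show γ 0 - z = a; rw [h0]; abel,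
      by show γ m - z = b; rw [hmb]; abel, ?_⟩
    refine Finset.sum_congr rfl fun i _ => ?_
    show hitC (γ i) (γ (i + 1)) c = hitC (γ i - z) (γ (i + 1) - z) (shiftC z c)
    rw [hitC_shift, ez, ez]

lemma shIdx_injective (z : Fin d → ℤ) : Function.Injective (shIdx z : frogIdx d → frogIdx d) := by
  intro i j hij
  match i, j with
  | Sum.inl a, Sum.inl b =>
      have h1 : a + z = b + z := Sum.inl.inj hij
      rw [add_left_inj] at h1
      rw [h1]
  | Sum.inl a, Sum.inr q => exact (by injection hij)
  | Sum.inr q, Sum.inl a => exact (by injection hij)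
  | Sum.inr p, Sum.inr q =>
      have h2 : (p.1 + z, p.2) = (q.1 + z, q.2) := Sum.inr.inj hij
      rw [Prod.ext_iff] at h2
      obtain ⟨h3, h4⟩ := h2
      rw [add_left_inj] at h3
      have h5 : p = q := Prod.ext_iff.2 ⟨h3, h4⟩
      rw [h5]

lemma map_shift_emap_eq (M : FrogModel d Ω P) [IsProbabilityMeasure P] (z : Fin d → ℤ) :
    Measure.map (fun ω => shiftC z (emap M ω)) P = Measure.map (emap M) P := by
  classical
  have hmeas_e := emap_measurable M
  have hmeas_se : Measurable fun ω => shiftC z (emap M ω) := (measurable_shiftC z).comp hmeas_e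
  haveI : IsProbabilityMeasure (Measure.map (emap M) P) :=
    Measure.isProbabilityMeasure_map hmeas_e.aemeasurable
  haveI : IsProbabilityMeasure (Measure.map (fun ω => shiftC z (emap M ω)) P) :=
    Measure.isProbabilityMeasure_map hmeas_se.aemeasurable
  -- the independent family
  set Fam : ∀ i : frogIdx d, Ω → frogCodom d i := fun i =>
    match i with
    | Sum.inl x => M.η x
    | Sum.inr q => fun ω => M.S q.1 q.2.1 (q.2.2 + 1) ω - M.S q.1 q.2.1 q.2.2 ω
    with hFam
  have hindep : iIndepFun (m := frogCodomMS d) Fam P := M.indep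
  have hFe : ∀ (j : frogIdx d) (ω : Ω), emap M ω j = Fam j ω := by
    intro j ω
    match j with
    | Sum.inl y => rfl
    | Sum.inr q => rfl
  refine ext_of_generate_finite
    (piiUnionInter (fun i : frogIdx d =>
      {s : Set (CSp d) | MeasurableSet[(frogCodomMS d i).comap fun c : CSp d => c i] s})
      Set.univ) ?_ ?_ ?_ ?_
  · exact ((generateFrom_piiUnionInter_measurableSet
      (fun i : frogIdx d => (frogCodomMS d i).comap fun c : CSp d => c i) Set.univ).trans
      (by rw [iSup_univ]; rfl)).symm
  · exact isPiSystem_piiUnionInter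
      (fun i : frogIdx d =>
        {s : Set (CSp d) | MeasurableSet[(frogCodomMS d i).comap fun c : CSp d => c i] s})
      (fun i => fun s hs t ht _ => by
        simp only [Set.mem_setOf_eq] at hs ht ⊢
        exact MeasurableSet.inter hs ht) Set.univ
  · rintro s ⟨t, -, f, hf, rfl⟩
    -- choose base sets for the cylinder
    let v : ∀ i : frogIdx d, Set (frogCodom d i) := fun i =>
      if h : ∃ u : Set (frogCodom d i), MeasurableSet u ∧ (fun c : CSp d => c i) ⁻¹' u = f i
      then h.choose else Set.univ
    have hvm : ∀ i, MeasurableSet (v i) := by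
      intro i
      by_cases h : ∃ u : Set (frogCodom d i), MeasurableSet u ∧
          (fun c : CSp d => c i) ⁻¹' u = f i
      · simp only [v, dif_pos h]
        exact h.choose_spec.1
      · simp only [v, dif_neg h]
        exact MeasurableSet.univ
    have hvf : ∀ i ∈ t, (fun c : CSp d => c i) ⁻¹' (v i) = f i := by
      intro i hi
      have h : ∃ u : Set (frogCodom d i), MeasurableSet u ∧
          (fun c : CSp d => c i) ⁻¹' u = f i := hf i hi
      simp only [v, dif_pos h]
      exact h.choose_spec.2
    -- transported base sets
    let w : ∀ j : frogIdx d, Set (frogCodom d j) := fun j =>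
      match j with
      | Sum.inl y => v (Sum.inl (y - z))
      | Sum.inr q => v (Sum.inr (q.1 - z, q.2))
    have hwm : ∀ j, MeasurableSet (w j) := by
      intro j
      match j with
      | Sum.inl y => exact hvm (Sum.inl (y - z))
      | Sum.inr q => exact hvm (Sum.inr (q.1 - z, q.2))
    have hmem : ∀ (c : CSp d), ∀ i ∈ t,
        (shiftC z c ∈ f i ↔ c (shIdx z i) ∈ w (shIdx z i)) := by
      intro c i hi
      rw [← hvf i hi]
      show shiftC z c i ∈ v i ↔ c (shIdx z i) ∈ w (shIdx z i)
      match i with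
      | Sum.inl y =>
          show c (Sum.inl (y + z)) ∈ v (Sum.inl y) ↔
            c (Sum.inl (y + z)) ∈ v (Sum.inl (y + z - z))
          rw [add_sub_cancel_right]
      | Sum.inr q =>
          show c (Sum.inr (q.1 + z, q.2)) ∈ v (Sum.inr q) ↔
            c (Sum.inr (q.1 + z, q.2)) ∈ v (Sum.inr (q.1 + z - z, q.2))
          rw [add_sub_cancel_right]
    have hs_meas : MeasurableSet (⋂ i ∈ t, f i) := by
      refine Finset.measurableSet_biInter _ fun i hi => ?_
      rw [← hvf i hi]
      exact (measurable_pi_apply i) (hvm i)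
    rw [Measure.map_apply hmeas_se hs_meas, Measure.map_apply hmeas_e hs_meas]
    have hL : (fun ω => shiftC z (emap M ω)) ⁻¹' (⋂ i ∈ t, f i) =
        ⋂ i ∈ t, Fam (shIdx z i) ⁻¹' (w (shIdx z i)) := by
      ext ω
      simp only [mem_preimage, mem_iInter]
      refine forall_congr' fun i => forall_congr' fun hi => ?_
      rw [hmem (emap M ω) i hi, hFe (shIdx z i) ω]
    have hR : emap M ⁻¹' (⋂ i ∈ t, f i) = ⋂ i ∈ t, Fam i ⁻¹' (v i) := by
      ext ω
      simp only [mem_preimage, mem_iInter]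
      refine forall_congr' fun i => forall_congr' fun hi => ?_
      rw [← hvf i hi]
      show emap M ω i ∈ v i ↔ _
      rw [hFe i ω]
    rw [hL, hR]
    have himg : (⋂ i ∈ t, Fam (shIdx z i) ⁻¹' (w (shIdx z i))) =
        ⋂ j ∈ t.image (shIdx z), Fam j ⁻¹' (w j) := by
      ext ω
      simp only [mem_iInter, Finset.mem_image]
      constructor
      · rintro h j ⟨i, hi, rfl⟩
        exact h i hi
      · intro h i hi
        exact h (shIdx z i) ⟨i, hi, rfl⟩
    rw [himg]
    rw [hindep.measure_inter_preimage_eq_mul (t.image (shIdx z)) (fun j _ => hwm j)]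
    rw [hindep.measure_inter_preimage_eq_mul t (fun i _ => hvm i)]
    rw [Finset.prod_image (fun i _ j _ h => shIdx_injective z h)]
    refine Finset.prod_congr rfl fun i _ => ?_
    match i with
    | Sum.inl y =>
        show P (M.η (y + z) ⁻¹' (v (Sum.inl (y + z - z)))) = P (M.η y ⁻¹' (v (Sum.inl y)))
        rw [add_sub_cancel_right,
          ← Measure.map_apply (M.meas_η (y + z)) (hvm (Sum.inl y)),
          ← Measure.map_apply (M.meas_η y) (hvm (Sum.inl y)),
          M.η_ident (y + z), M.η_ident y]
    | Sum.inr q =>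
        have hm1 : Measurable fun ω =>
            M.S (q.1 + z) q.2.1 (q.2.2 + 1) ω - M.S (q.1 + z) q.2.1 q.2.2 ω :=
          (M.meas_S _ _ _).sub (M.meas_S _ _ _)
        have hm2 : Measurable fun ω =>
            M.S q.1 q.2.1 (q.2.2 + 1) ω - M.S q.1 q.2.1 q.2.2 ω :=
          (M.meas_S _ _ _).sub (M.meas_S _ _ _)
        show P ((fun ω => M.S (q.1 + z) q.2.1 (q.2.2 + 1) ω - M.S (q.1 + z) q.2.1 q.2.2 ω) ⁻¹'
            (v (Sum.inr (q.1 + z - z, q.2)))) =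
          P ((fun ω => M.S q.1 q.2.1 (q.2.2 + 1) ω - M.S q.1 q.2.1 q.2.2 ω) ⁻¹' (v (Sum.inr q)))
        rw [add_sub_cancel_right,
          ← Measure.map_apply hm1 (hvm (Sum.inr q)),
          ← Measure.map_apply hm2 (hvm (Sum.inr q)),
          M.step_law (q.1 + z) q.2.1 q.2.2, M.step_law q.1 q.2.1 q.2.2]
  · simp

lemma pass_step {x : Fin d → ℤ} {c : CSp d} (hc : c ∈ Grec x) (a b : ℕ) :
    passC (vC x (a + 1) c • x) (vC x (b + 1) c • x) c =
      passC (vC x a (shiftC (vC x 1 c • x) c) • x) (vC x b (shiftC (vC x 1 c • x) c) • x)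
        (shiftC (vC x 1 c • x) c) := by
  rw [passC_shift, ← add_nsmul, ← add_nsmul, ← vC_shift hc a, ← vC_shift hc b]

end Canonical

section Kac

variable {α : Type*} [MeasurableSpace α] {μ : Measure α} [IsProbabilityMeasure μ]
variable {f : α → α} {A : Set α}

/-- The induced (first-return) map of `f` on `A`. -/
noncomputable def retMap (f : α → α) (A : Set α) (c : α) : α :=
  f^[sInf {n : ℕ | 0 < n ∧ f^[n] c ∈ A}] c

lemma measurable_retTime (hf : Measurable f) (hA : MeasurableSet A) :
    Measurable fun c => sInf {n : ℕ | 0 < n ∧ f^[n] c ∈ A} := by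
  apply measurable_nat_sInf
  intro n
  have h : {c | n ∈ {m : ℕ | 0 < m ∧ f^[m] c ∈ A}} =
      if 0 < n then f^[n] ⁻¹' A else ∅ := by
    split_ifs with hn
    · ext c; simp [hn]
    · ext c; simp [hn]
  rw [h]
  split_ifs with hn
  · exact (hf.iterate n) hA
  · exact MeasurableSet.empty

lemma measurable_retMap (hf : Measurable f) (hA : MeasurableSet A) :
    Measurable (retMap f A) :=
  measurable_nat_param₁ (fun m => hf.iterate m) (measurable_retTime hf hA)

theorem kac_measure (hf : MeasurePreserving f μ μ) (hA : MeasurableSet A)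
    {B : Set α} (hB : MeasurableSet B) (hBA : B ⊆ A) :
    μ (A ∩ retMap f A ⁻¹' B) = μ B := by
  classical
  set E : ℕ → Set α := fun n => f^[n] ⁻¹' B ∩ ⋂ k ∈ Finset.Ico 1 n, f^[k] ⁻¹' Aᶜ with hEdef
  have hEmeas : ∀ n, MeasurableSet (E n) := fun n =>
    ((hf.measurable.iterate n) hB).inter
      (Finset.measurableSet_biInter _ fun k _ => (hf.measurable.iterate k) hA.compl)
  have hE1 : E 1 = f ⁻¹' B := by
    ext c
    simp only [hEdef, mem_inter_iff, mem_iInter, Finset.mem_Ico, mem_preimage,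
      Function.iterate_one]
    constructor
    · rintro ⟨h1, -⟩
      exact h1
    · intro h1
      refine ⟨h1, ?_⟩
      intro k hk
      exact absurd hk (by omega)
  have hkey : ∀ n, 1 ≤ n → E (n + 1) = f ⁻¹' (E n) ∩ f ⁻¹' Aᶜ := by
    intro n hn
    ext c
    simp only [hEdef, mem_inter_iff, mem_preimage, mem_iInter, Finset.mem_Ico, mem_compl_iff]
    constructor
    · rintro ⟨hB1, hk⟩
      refine ⟨⟨?_, ?_⟩, ?_⟩
      · rw [← Function.iterate_succ_apply]
        exact hB1
      · intro k hk1
        rw [← Function.iterate_succ_apply]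
        exact hk (k + 1) ⟨by omega, by omega⟩
      · have := hk 1 ⟨le_refl 1, by omega⟩
        rwa [Function.iterate_one] at this
    · rintro ⟨⟨hB1, hk⟩, hfc⟩
      refine ⟨?_, ?_⟩
      · rw [Function.iterate_succ_apply]
        exact hB1
      · intro k hk1
        rcases Nat.eq_or_lt_of_le hk1.1 with h1 | h1
        · rw [← h1, Function.iterate_one]
          exact hfc
        · have h2 : k - 1 + 1 = k := by omega
          rw [← h2, Function.iterate_succ_apply]
          exact hk (k - 1) ⟨by omega, by omega⟩
  have hrec : ∀ n, 1 ≤ n → μ (E n) = μ (A ∩ E n) + μ (E (n + 1)) := by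
    intro n hn
    have h1 : μ (E n) = μ (f ⁻¹' (E n)) :=
      (hf.measure_preimage (hEmeas n).nullMeasurableSet).symm
    have h2 : μ (f ⁻¹' (E n)) =
        μ (f ⁻¹' (E n) ∩ f ⁻¹' A) + μ (f ⁻¹' (E n) \ f ⁻¹' A) :=
      (measure_inter_add_diff _ (hf.measurable hA)).symm
    have h3 : f ⁻¹' (E n) ∩ f ⁻¹' A = f ⁻¹' (A ∩ E n) := by
      rw [← Set.preimage_inter, Set.inter_comm (E n) A]
    have h4 : f ⁻¹' (E n) \ f ⁻¹' A = E (n + 1) := by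
      rw [hkey n hn, Set.diff_eq, Set.preimage_compl]
    rw [h1, h2, h3, h4, hf.measure_preimage (hA.inter (hEmeas n)).nullMeasurableSet]
  have htel : ∀ N, μ B = (∑ n ∈ Finset.range N, μ (A ∩ E (n + 1))) + μ (E (N + 1)) := by
    intro N
    induction N with
    | zero =>
        have h01 : (0 : ℕ) + 1 = 1 := rfl
        rw [h01, hE1, hf.measure_preimage hB.nullMeasurableSet]
        simp
    | succ N ih =>
        rw [ih, hrec (N + 1) (by omega), Finset.sum_range_succ]
        ring
  -- the tail goes to zero
  set F : ℕ → Set α := fun N => f^[N + 1] ⁻¹' A ∩ ⋂ k ∈ Finset.Ico 1 (N + 1), f^[k] ⁻¹' Aᶜ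
    with hFdef
  have hFmeas : ∀ N, MeasurableSet (F N) := fun N =>
    ((hf.measurable.iterate (N + 1)) hA).inter
      (Finset.measurableSet_biInter _ fun k _ => (hf.measurable.iterate k) hA.compl)
  have hEF : ∀ N, E (N + 1) ⊆ F N := by
    intro N c hc
    exact ⟨hBA hc.1, hc.2⟩
  have hFdisj : Pairwise (Function.onFun Disjoint F) := by
    intro N M hNM
    rcases Nat.lt_or_ge N M with h | h
    · refine Set.disjoint_left.2 fun c hcN hcM => ?_
      have h1 : f^[N + 1] c ∈ A := hcN.1
      have h2 : f^[N + 1] c ∉ A := by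
        have := hcM.2
        simp only [mem_iInter, Finset.mem_Ico, mem_compl_iff, mem_preimage] at this
        exact this (N + 1) ⟨by omega, by omega⟩
      exact h2 h1
    · have h' : M < N := by omega
      refine Set.disjoint_left.2 fun c hcN hcM => ?_
      have h1 : f^[M + 1] c ∈ A := hcM.1
      have h2 : f^[M + 1] c ∉ A := by
        have := hcN.2
        simp only [mem_iInter, Finset.mem_Ico, mem_compl_iff, mem_preimage] at this
        exact this (M + 1) ⟨by omega, by omega⟩
      exact h2 h1
  have htsum : ∑' N, μ (F N) ≠ ∞ := by
    rw [← measure_iUnion hFdisj hFmeas]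
    exact measure_ne_top μ _
  have htend0 : Filter.Tendsto (fun N => μ (E (N + 1))) Filter.atTop (nhds 0) := by
    refine tendsto_of_tendsto_of_tendsto_of_le_of_le tendsto_const_nhds
      (ENNReal.tendsto_atTop_zero_of_tsum_ne_top htsum) (fun N => zero_le)
      (fun N => measure_mono (hEF N))
  have hBsum : μ B = ∑' n, μ (A ∩ E (n + 1)) := by
    have h1 : Filter.Tendsto (fun N => ∑ n ∈ Finset.range N, μ (A ∩ E (n + 1)))
        Filter.atTop (nhds (∑' n, μ (A ∩ E (n + 1)))) := ENNReal.tendsto_nat_tsum _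
    have h2 := h1.add htend0
    rw [add_zero] at h2
    have h3 : (fun N => (∑ n ∈ Finset.range N, μ (A ∩ E (n + 1))) + μ (E (N + 1))) =
        fun _ => μ B := funext fun N => (htel N).symm
    rw [h3] at h2
    exact tendsto_nhds_unique tendsto_const_nhds h2
  -- the return set
  set W : Set α := {c | ∃ n : ℕ, 0 < n ∧ f^[n] c ∈ A} with hWdef
  have hW0 : μ (A \ W) = 0 := by
    have hcons : Conservative f μ := hf.conservative
    have hae := hcons.ae_mem_imp_frequently_image_mem hA.nullMeasurableSet
    rw [measure_eq_zero_iff_ae_notMem]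
    filter_upwards [hae] with c hc
    rintro ⟨hcA, hcW⟩
    obtain ⟨n, hn1, hn2⟩ := Filter.frequently_atTop.1 (hc hcA) 1
    exact hcW ⟨n, by omega, hn2⟩
  have hdecomp : (A ∩ retMap f A ⁻¹' B) ∩ W = ⋃ n, (A ∩ E (n + 1)) := by
    ext c
    constructor
    · rintro ⟨⟨hcA, hcB⟩, hcW⟩
      have hne : {n : ℕ | 0 < n ∧ f^[n] c ∈ A}.Nonempty := hcW
      have hmem := Nat.sInf_mem hne
      set τ := sInf {n : ℕ | 0 < n ∧ f^[n] c ∈ A} with hτ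
      have hmem2 : 0 < τ ∧ f^[τ] c ∈ A := hmem
      have h0τ : 0 < τ := hmem2.1
      refine Set.mem_iUnion.2 ⟨τ - 1, hcA, ?_, ?_⟩
      · have hτ1 : τ - 1 + 1 = τ := by omega
        rw [hτ1]
        exact hcB
      · simp only [mem_iInter, Finset.mem_Ico, mem_compl_iff, mem_preimage]
        intro k hk
        have hk2 : k < τ := by omega
        have := Nat.notMem_of_lt_sInf (hτ ▸ hk2)
        intro hkA
        exact this ⟨by omega, hkA⟩
    · intro hc
      obtain ⟨n, hcA, hcE1, hcE2⟩ := Set.mem_iUnion.1 hc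
      simp only [mem_iInter, Finset.mem_Ico, mem_compl_iff, mem_preimage] at hcE2
      have hmem' : n + 1 ∈ {m : ℕ | 0 < m ∧ f^[m] c ∈ A} := ⟨by omega, hBA hcE1⟩
      have hτle : sInf {m : ℕ | 0 < m ∧ f^[m] c ∈ A} ≤ n + 1 := Nat.sInf_le hmem'
      have hτeq : sInf {m : ℕ | 0 < m ∧ f^[m] c ∈ A} = n + 1 := by
        rcases Nat.eq_or_lt_of_le hτle with h | h
        · exact h
        · exfalso
          have hm := Nat.sInf_mem (⟨n + 1, hmem'⟩ : Set.Nonempty _)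
          have hm1 : 0 < sInf {m : ℕ | 0 < m ∧ f^[m] c ∈ A} := hm.1
          refine (hcE2 _ ⟨?_, ?_⟩) hm.2 <;> omega
      refine ⟨⟨hcA, ?_⟩, ⟨n + 1, by omega, hBA hcE1⟩⟩
      show f^[sInf {m : ℕ | 0 < m ∧ f^[m] c ∈ A}] c ∈ B
      rw [hτeq]
      exact hcE1
  have hAEdisj : Pairwise (Function.onFun Disjoint fun n => A ∩ E (n + 1)) := by
    intro N M hNM
    exact Disjoint.mono Set.inter_subset_right Set.inter_subset_right
      (Disjoint.mono (hEF N) (hEF M) (hFdisj hNM))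
  have hX : μ (A ∩ retMap f A ⁻¹' B) = μ ((A ∩ retMap f A ⁻¹' B) ∩ W) := by
    refine le_antisymm ?_ (measure_mono Set.inter_subset_left)
    have hsub : (A ∩ retMap f A ⁻¹' B) \ W ⊆ A \ W := by
      rintro c ⟨hc1, hc2⟩
      exact ⟨hc1.1, hc2⟩
    calc μ (A ∩ retMap f A ⁻¹' B)
        ≤ μ ((A ∩ retMap f A ⁻¹' B) ∩ W) +
            μ ((A ∩ retMap f A ⁻¹' B) \ W) :=
          measure_le_inter_add_diff μ _ _
      _ = μ ((A ∩ retMap f A ⁻¹' B) ∩ W) := by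
          rw [measure_mono_null hsub hW0, add_zero]
  rw [hX, hdecomp, measure_iUnion hAEdisj (fun n => hA.inter (hEmeas (n + 1))), hBsum]

theorem kac_map_cond (hf : MeasurePreserving f μ μ) (hA : MeasurableSet A) :
    Measure.map (retMap f A) (μ[|A]) = μ[|A] := by
  ext s hs
  rw [Measure.map_apply (measurable_retMap hf.measurable hA) hs,
    cond_apply hA μ _, cond_apply hA μ s]
  congr 1
  set W : Set α := {c | ∃ n : ℕ, 0 < n ∧ f^[n] c ∈ A} with hWdef
  have hW0 : μ (A \ W) = 0 := by
    have hcons : Conservative f μ := hf.conservative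
    have hae := hcons.ae_mem_imp_frequently_image_mem hA.nullMeasurableSet
    rw [measure_eq_zero_iff_ae_notMem]
    filter_upwards [hae] with c hc
    rintro ⟨hcA, hcW⟩
    obtain ⟨n, hn1, hn2⟩ := Filter.frequently_atTop.1 (hc hcA) 1
    exact hcW ⟨n, by omega, hn2⟩
  have hXgen : ∀ X : Set α, X ⊆ A → μ X = μ (X ∩ W) := by
    intro X hXA
    refine le_antisymm ?_ (measure_mono Set.inter_subset_left)
    have hsub : X \ W ⊆ A \ W := by
      rintro c ⟨hc1, hc2⟩
      exact ⟨hXA hc1, hc2⟩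
    calc μ X ≤ μ (X ∩ W) + μ (X \ W) := measure_le_inter_add_diff μ _ _
      _ = μ (X ∩ W) := by rw [measure_mono_null hsub hW0, add_zero]
  have hWA : ∀ c ∈ A ∩ W, retMap f A c ∈ A := by
    rintro c ⟨hcA, hcW⟩
    exact (Nat.sInf_mem (hcW : {n : ℕ | 0 < n ∧ f^[n] c ∈ A}.Nonempty)).2
  have hseteq : (A ∩ retMap f A ⁻¹' s) ∩ W = (A ∩ retMap f A ⁻¹' (s ∩ A)) ∩ W := by
    ext c
    constructor
    · rintro ⟨⟨hcA, hcs⟩, hcW⟩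
      exact ⟨⟨hcA, hcs, hWA c ⟨hcA, hcW⟩⟩, hcW⟩
    · rintro ⟨⟨hcA, hcs⟩, hcW⟩
      exact ⟨⟨hcA, hcs.1⟩, hcW⟩
  calc μ (A ∩ retMap f A ⁻¹' s)
      = μ ((A ∩ retMap f A ⁻¹' s) ∩ W) := hXgen _ Set.inter_subset_left
    _ = μ ((A ∩ retMap f A ⁻¹' (s ∩ A)) ∩ W) := by rw [hseteq]
    _ = μ (A ∩ retMap f A ⁻¹' (s ∩ A)) := (hXgen _ Set.inter_subset_left).symm
    _ = μ (s ∩ A) := kac_measure hf hA (hs.inter hA) Set.inter_subset_right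
    _ = μ (A ∩ s) := by rw [Set.inter_comm]

end Kac

end FrogAux

/-- **Stationarity of renewal-framed passage times.** With `Y(m,n) = T(v_m·x, v_n·x)`, under
the conditional law given `{η(0) ≥ 1}`, for all `m₁ ≤ m₂ ≤ ⋯ ≤ m_j` and every `p ≥ 0`, the
vectors `(Y(m₁,m₂), …, Y(m_{j-1},m_j))` and `(Y(m₁+p,m₂+p), …, Y(m_{j-1}+p,m_j+p))` have the
same joint distribution. -/
theorem frog_renewal_stationarity
    {d : ℕ} (hd : 1 ≤ d) {Ω : Type} [MeasurableSpace Ω] {P : Measure Ω}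
    [IsProbabilityMeasure P] (M : FrogModel d Ω P)
    (hp : 0 < P {ω | 1 ≤ M.η 0 ω})
    (x : Fin d → ℤ) (hx : x ≠ 0) :
    ∀ (j : ℕ) (ms : Fin (j + 1) → ℕ), Monotone ms → ∀ p : ℕ,
      Measure.map
          (fun ω => fun i : Fin j =>
            passT M ((vseq M x (ms i.castSucc) ω) • x) ((vseq M x (ms i.succ) ω) • x) ω)
          (P[|{ω | 1 ≤ M.η 0 ω}]) =
        Measure.map
          (fun ω => fun i : Fin j =>
            passT M ((vseq M x (ms i.castSucc + p) ω) • x) ((vseq M x (ms i.succ + p) ω) • x) ω)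
          (P[|{ω | 1 ≤ M.η 0 ω}]) := by
  intro j ms _hm p
  classical
  set A' : Set (FrogAux.CSp d) := {c | 1 ≤ c (Sum.inl (0 : Fin d → ℤ))} with hA'def
  have hA'meas : MeasurableSet A' :=
    (measurable_pi_apply (X := frogCodom d) (Sum.inl (0 : Fin d → ℤ))) (.of_discrete (s := Ici 1))
  have he := FrogAux.emap_measurable M
  set pi : Measure (FrogAux.CSp d) := Measure.map (FrogAux.emap M) P with hpi
  haveI : IsProbabilityMeasure pi := Measure.isProbabilityMeasure_map he.aemeasurable
  have hpre : FrogAux.emap M ⁻¹' A' = {ω | 1 ≤ M.η 0 ω} := rfl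
  have hcondmap : Measure.map (FrogAux.emap M) (P[|{ω | 1 ≤ M.η 0 ω}]) = pi[|A'] := by
    have h1 : pi.restrict A' = Measure.map (FrogAux.emap M)
        (P.restrict {ω | 1 ≤ M.η 0 ω}) := by
      rw [hpi, Measure.restrict_map he hA'meas, hpre]
    have h2 : pi A' = P {ω | 1 ≤ M.η 0 ω} := by
      rw [hpi, Measure.map_apply he hA'meas, hpre]
    simp only [ProbabilityTheory.cond]
    rw [Measure.map_smul, h1, h2]
  set Y : ℕ → FrogAux.CSp d → (Fin j → ℝ≥0∞) := fun q c => fun i =>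
    FrogAux.passC ((FrogAux.vC x (ms i.castSucc + q) c) • x)
      ((FrogAux.vC x (ms i.succ + q) c) • x) c with hY
  have hYmeas : ∀ q, Measurable (Y q) := by
    intro q
    apply measurable_pi_lambda
    intro i
    exact FrogAux.measurable_nat_param₂
      (fun m n => FrogAux.measurable_passC (m • x) (n • x))
      (FrogAux.measurable_vC x (ms i.castSucc + q)) (FrogAux.measurable_vC x (ms i.succ + q))
  have hfunL : (fun ω => fun i : Fin j =>
      passT M ((vseq M x (ms i.castSucc) ω) • x) ((vseq M x (ms i.succ) ω) • x) ω)
      = fun ω => Y 0 (FrogAux.emap M ω) := by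
    funext ω
    simp only [hY, Nat.add_zero]
    funext i
    rw [FrogAux.vseq_eq_vC, FrogAux.vseq_eq_vC, FrogAux.passT_eq_passC]
  have hfunR : (fun ω => fun i : Fin j =>
      passT M ((vseq M x (ms i.castSucc + p) ω) • x) ((vseq M x (ms i.succ + p) ω) • x) ω)
      = fun ω => Y p (FrogAux.emap M ω) := by
    funext ω
    simp only [hY]
    funext i
    rw [FrogAux.vseq_eq_vC, FrogAux.vseq_eq_vC, FrogAux.passT_eq_passC]
  rw [hfunL, hfunR]
  have htrans : ∀ q : ℕ, Measure.map (fun ω => Y q (FrogAux.emap M ω))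
      (P[|{ω | 1 ≤ M.η 0 ω}]) = Measure.map (Y q) (pi[|A']) := by
    intro q
    rw [← hcondmap, Measure.map_map (hYmeas q) he]
    rfl
  rw [htrans 0, htrans p]
  -- shift is measure preserving
  have hmp : MeasurePreserving (FrogAux.shiftC x) pi pi := by
    refine ⟨FrogAux.measurable_shiftC x, ?_⟩
    rw [hpi, Measure.map_map (FrogAux.measurable_shiftC x) he]
    exact FrogAux.map_shift_emap_eq M x
  -- recurrence: the renewal set is conull
  have hGnull : (pi[|A']) (FrogAux.Grec x)ᶜ = 0 := by
    have hA'G : pi (A' \ FrogAux.Grec x) = 0 := by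
      have hcons : Conservative (FrogAux.shiftC x) pi := hmp.conservative
      have hae := hcons.ae_mem_imp_frequently_image_mem hA'meas.nullMeasurableSet
      rw [measure_eq_zero_iff_ae_notMem]
      filter_upwards [hae] with c hc
      rintro ⟨hcA, hcG⟩
      apply hcG
      intro m
      obtain ⟨n, hn1, hn2⟩ := Filter.frequently_atTop.1 (hc hcA) (m + 1)
      refine ⟨n, by omega, ?_⟩
      rw [FrogAux.shiftC_iterate] at hn2
      have h2 : FrogAux.shiftC (n • x) c (Sum.inl 0) = c (Sum.inl (n • x)) := by
        show c (Sum.inl (0 + n • x)) = c (Sum.inl (n • x))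
        rw [zero_add]
      exact h2 ▸ (hn2 : 1 ≤ FrogAux.shiftC (n • x) c (Sum.inl 0))
    rw [ProbabilityTheory.cond_apply hA'meas]
    rw [show A' ∩ (FrogAux.Grec x)ᶜ = A' \ FrogAux.Grec x from rfl, hA'G, mul_zero]
  -- the induced first-return map
  set TA := FrogAux.retMap (FrogAux.shiftC x) A' with hTA
  have hTAeq : ∀ c : FrogAux.CSp d, TA c = FrogAux.shiftC (FrogAux.vC x 1 c • x) c := by
    intro c
    rw [hTA]
    show (FrogAux.shiftC x)^[sInf {n : ℕ | 0 < n ∧ (FrogAux.shiftC x)^[n] c ∈ A'}] c = _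
    have hsets : {n : ℕ | 0 < n ∧ (FrogAux.shiftC x)^[n] c ∈ A'} =
        {n : ℕ | FrogAux.vC x 0 c < n ∧ 1 ≤ c (Sum.inl (n • x))} := by
      ext n
      simp only [mem_setOf_eq]
      have h2 : FrogAux.shiftC (n • x) c (Sum.inl 0) = c (Sum.inl (n • x)) := by
        show c (Sum.inl (0 + n • x)) = c (Sum.inl (n • x))
        rw [zero_add]
      constructor
      · rintro ⟨hn, hmem⟩
        rw [FrogAux.shiftC_iterate] at hmem
        exact ⟨hn, h2 ▸ (hmem : 1 ≤ FrogAux.shiftC (n • x) c (Sum.inl 0))⟩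
      · rintro ⟨hn, hmem⟩
        refine ⟨hn, ?_⟩
        rw [FrogAux.shiftC_iterate]
        show 1 ≤ FrogAux.shiftC (n • x) c (Sum.inl 0)
        rw [h2]
        exact hmem
    rw [hsets, FrogAux.shiftC_iterate]
    rfl
  have hTAmeas : Measurable TA :=
    FrogAux.measurable_retMap (FrogAux.measurable_shiftC x) hA'meas
  have hTAcond : Measure.map TA (pi[|A']) = pi[|A'] := FrogAux.kac_map_cond hmp hA'meas
  -- the step identity on the renewal set
  have hGinv : ∀ c ∈ FrogAux.Grec x, TA c ∈ FrogAux.Grec x := by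
    intro c hc
    rw [hTAeq c]
    exact FrogAux.shiftC_mem_Grec hc _
  have hstep : ∀ c ∈ FrogAux.Grec x, ∀ q, Y (q + 1) c = Y q (TA c) := by
    intro c hc q
    have e1 : ∀ r : ℕ, r + (q + 1) = (r + q) + 1 := fun r => by omega
    simp only [hY]
    funext i
    rw [hTAeq c, e1 (ms i.castSucc), e1 (ms i.succ), FrogAux.pass_step hc]
  have hiter : ∀ (q : ℕ) (c : FrogAux.CSp d), c ∈ FrogAux.Grec x →
      Y q c = Y 0 (TA^[q] c) := by
    intro q
    induction q with
    | zero => intro c hc; simp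
    | succ q ih =>
        intro c hc
        rw [hstep c hc q, ih (TA c) (hGinv c hc), ← Function.iterate_succ_apply]
  have hae : (fun c => Y p c) =ᵐ[pi[|A']] fun c => Y 0 (TA^[p] c) := by
    rw [Filter.EventuallyEq, ae_iff]
    refine measure_mono_null ?_ hGnull
    intro c hc hcG
    exact hc (hiter p c hcG)
  have hmapiter : ∀ q : ℕ, Measure.map (TA^[q]) (pi[|A']) = pi[|A'] := by
    intro q
    induction q with
    | zero => exact Measure.map_id
    | succ r ih =>
        rw [Function.iterate_succ']
        rw [← Measure.map_map hTAmeas (hTAmeas.iterate r), ih, hTAcond]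
  calc Measure.map (Y 0) (pi[|A'])
      = Measure.map (Y 0) (Measure.map (TA^[p]) (pi[|A'])) := by rw [hmapiter p]
    _ = Measure.map (Y 0 ∘ TA^[p]) (pi[|A']) :=
        Measure.map_map (hYmeas 0) (hTAmeas.iterate p)
    _ = Measure.map (Y p) (pi[|A']) := (Measure.map_congr hae).symm
end
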